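/- arXiv:2210.08259 — 5 statements merged into one kernel-verified Lean document; each statement's English description precedes it below -/
import Mathlib

section
/- Assume: T > 0; d1, r1, a1 : ℝ → ℝ are continuous, positive, T-periodic; the kernel J1 : ℝ → ℝ is nonnegative, Lebesgue measurable, even (J1(x) = J1(−x)), satisfies ∫_ℝ J1(x) dx = 1 and ∫_ℝ J1(x)e^{−λx} dx < ∞ for every λ ∈ ℝ. Define γ1(μ) = (1/T)∫_0^T [d1(t)(∫_ℝ J1(y)e^{−μy} dy − 1) + a1(t)p(t)] dt for μ > 0. Then inf_{0 < μ < ∞} γ1(μ)/μ > 0. -/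
open MeasureTheory Set Filter intervalIntegral


theorem cosh_lb (x : ℝ) : x^2/2 ≤ Real.cosh x - 1 := by
  have h1 : Real.cosh x = 2 * Real.sinh (x/2)^2 + 1 := by
    have := Real.cosh_two_mul (x/2)
    have h2 := Real.cosh_sq (x/2)
    rw [show 2*(x/2) = x by ring] at this
    rw [this, h2]; ring
  have h3 : |x|/2 ≤ Real.sinh (|x|/2) := Real.self_le_sinh_iff.2 (by positivity)
  have h4 : Real.sinh (x/2)^2 = Real.sinh (|x|/2)^2 := by
    rcases abs_cases x with ⟨h,_⟩|⟨h,_⟩ <;> rw [h]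
    rw [show -x/2 = -(x/2) by ring, Real.sinh_neg]; ring
  have h5 : (|x|/2)^2 ≤ Real.sinh (|x|/2)^2 := by
    have : (0:ℝ) ≤ |x|/2 := by positivity
    nlinarith
  have h6 : (|x|/2)^2 = x^2/4 := by rw [div_pow, sq_abs]; ring
  nlinarith

theorem kern (J1 : ℝ → ℝ) (hmeas : Measurable J1) (hnn : ∀ x, 0 ≤ J1 x)
    (hint1 : (∫ x, J1 x) = 1)
    (hintl : ∀ l : ℝ, Integrable fun x => J1 x * Real.exp (-l * x))
    (heven : ∀ x, J1 x = J1 (-x)) (μ : ℝ) :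
    (μ^2/2) * (∫ y, J1 y * min (y^2) 1) ≤ (∫ y, J1 y * Real.exp (-μ*y)) - 1 := by
  have Ip : Integrable (fun y => J1 y * Real.exp (-μ*y)) := hintl μ
  have Im : Integrable (fun y => J1 y * Real.exp (μ*y)) := by
    simpa using hintl (-μ)
  have IntJ : Integrable J1 := by simpa using hintl 0
  have hsym : (∫ y, J1 y * Real.exp (-μ*y)) = ∫ y, J1 y * Real.exp (μ*y) := by
    rw [← integral_neg_eq_self (fun y => J1 y * Real.exp (μ*y)) volume]
    congr 1; funext y
    rw [← heven y]; ring_nf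
  have hch : (fun y => J1 y * Real.cosh (μ*y)) =
      fun y => (J1 y * Real.exp (-μ*y) + J1 y * Real.exp (μ*y))/2 := by
    funext y; rw [Real.cosh_eq]; ring_nf
  have Ic : Integrable (fun y => J1 y * Real.cosh (μ*y)) := by
    rw [hch]; exact (Ip.add Im).div_const 2
  have hM : (∫ y, J1 y * Real.exp (-μ*y)) = ∫ y, J1 y * Real.cosh (μ*y) := by
    rw [hch, MeasureTheory.integral_div, MeasureTheory.integral_add Ip Im, ← hsym]; ring
  have Imin : Integrable (fun y => J1 y * min (y^2) 1) := by
    refine Integrable.mono' IntJ ?_ ?_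
    · exact (hmeas.mul ((measurable_id.pow_const 2).min measurable_const)).aestronglyMeasurable
    · refine Filter.Eventually.of_forall (fun y => ?_)
      have h1 : 0 ≤ min (y^2) 1 := le_min (sq_nonneg y) one_pos.le
      have h2 : min (y^2) 1 ≤ 1 := min_le_right _ _
      rw [Real.norm_eq_abs, abs_of_nonneg (mul_nonneg (hnn y) h1)]
      nlinarith [hnn y]
  have Ic1 : Integrable (fun y => J1 y * (Real.cosh (μ*y) - 1)) := by
    have := Ic.sub IntJ
    refine this.congr (Filter.Eventually.of_forall fun y => ?_)
    simp only [Pi.sub_apply]; ring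
  have hmono : (∫ y, (μ^2/2) * (J1 y * min (y^2) 1)) ≤
      ∫ y, J1 y * (Real.cosh (μ*y) - 1) := by
    refine integral_mono (Imin.const_mul _) Ic1 (fun y => ?_)
    have hc := cosh_lb (μ*y)
    have h1 : (μ^2/2) * min (y^2) 1 ≤ Real.cosh (μ*y) - 1 := by
      have : min (y^2) 1 ≤ y^2 := min_le_left _ _
      nlinarith [sq_nonneg μ]
    have h2 : 0 ≤ min (y^2) 1 := le_min (sq_nonneg y) one_pos.le
    calc (μ^2/2) * (J1 y * min (y^2) 1) = J1 y * ((μ^2/2) * min (y^2) 1) := by ring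
      _ ≤ J1 y * (Real.cosh (μ*y) - 1) := mul_le_mul_of_nonneg_left h1 (hnn y)
  rw [MeasureTheory.integral_const_mul] at hmono
  have : (∫ y, J1 y * (Real.cosh (μ*y) - 1)) =
      (∫ y, J1 y * Real.cosh (μ*y)) - 1 := by
    rw [show (fun y => J1 y * (Real.cosh (μ*y) - 1)) =
      (fun y => J1 y * Real.cosh (μ*y) - J1 y) from funext fun y => by ring,
      integral_sub Ic IntJ, hint1]
  rw [this, ← hM] at hmono
  exact hmono

theorem Cpos (J1 : ℝ → ℝ) (hmeas : Measurable J1) (hnn : ∀ x, 0 ≤ J1 x)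
    (hint1 : (∫ x, J1 x) = 1)
    (hintl : ∀ l : ℝ, Integrable fun x => J1 x * Real.exp (-l * x)) :
    0 < ∫ y, J1 y * min (y^2) 1 := by
  have IntJ : Integrable J1 := by simpa using hintl 0
  have Imin : Integrable (fun y => J1 y * min (y^2) 1) := by
    refine Integrable.mono' IntJ
      (hmeas.mul ((measurable_id.pow_const 2).min measurable_const)).aestronglyMeasurable
      (Filter.Eventually.of_forall fun y => ?_)
    have h1 : 0 ≤ min (y^2) 1 := le_min (sq_nonneg y) one_pos.le
    have h2 : min (y^2) 1 ≤ 1 := min_le_right _ _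
    rw [Real.norm_eq_abs, abs_of_nonneg (mul_nonneg (hnn y) h1)]
    nlinarith [hnn y]
  have hnn' : 0 ≤ fun y => J1 y * min (y^2) 1 := fun y =>
    mul_nonneg (hnn y) (le_min (sq_nonneg y) one_pos.le)
  rcases (integral_nonneg hnn').lt_or_eq with h | h
  · exact h
  · exfalso
    have h0 : (fun y => J1 y * min (y^2) 1) =ᵐ[volume] 0 :=
      (integral_eq_zero_iff_of_nonneg hnn' Imin).1 h.symm
    have hne : ∀ᵐ y : ℝ, y ≠ 0 := by
      have : volume ({0} : Set ℝ) = 0 := Real.volume_singleton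
      simpa [ae_iff] using this
    have : J1 =ᵐ[volume] 0 := by
      filter_upwards [h0, hne] with y hy hy0
      have hmp : 0 < min (y^2) 1 := lt_min (by positivity) one_pos
      simp only [Pi.zero_apply] at hy
      rcases mul_eq_zero.1 hy with h | h
      · exact h
      · exact absurd h hmp.ne'
    have h2 : (∫ x, J1 x) = 0 := by rw [integral_congr_ae this]; simp
    rw [hint1] at h2; exact one_ne_zero h2

noncomputable def p0c (r a : ℝ → ℝ) (T : ℝ) : ℝ :=
  (Real.exp (∫ s in (0:ℝ)..T, r s) - 1) /
    ∫ s in (0:ℝ)..T, Real.exp (∫ τ in (0:ℝ)..s, r τ) * a s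

noncomputable def pfun (r a : ℝ → ℝ) (T t : ℝ) : ℝ :=
  p0c r a T * Real.exp (∫ s in (0:ℝ)..t, r s) /
    (1 + p0c r a T * ∫ s in (0:ℝ)..t, Real.exp (∫ τ in (0:ℝ)..s, r τ) * a s)

theorem Apos (T : ℝ) (hT : 0 < T) (r1 a1 : ℝ → ℝ)
    (hr : Continuous r1) (hrp : ∀ t, 0 < r1 t)
    (ha : Continuous a1) (hap : ∀ t, 0 < a1 t) :
    0 < ∫ t in (0:ℝ)..T, a1 t * pfun r1 a1 T t := by
  have hRcont : Continuous fun t => ∫ s in (0:ℝ)..t, r1 s :=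
    intervalIntegral.continuous_primitive (fun a b => hr.intervalIntegrable a b) 0
  have hgcont : Continuous fun s => Real.exp (∫ τ in (0:ℝ)..s, r1 τ) * a1 s :=
    (Real.continuous_exp.comp hRcont).mul ha
  have hScont : Continuous fun t => ∫ s in (0:ℝ)..t,
      Real.exp (∫ τ in (0:ℝ)..s, r1 τ) * a1 s :=
    intervalIntegral.continuous_primitive (fun a b => hgcont.intervalIntegrable a b) 0
  have hp0 : 0 < p0c r1 a1 T := by
    unfold p0c
    apply div_pos
    · have h1 : 0 < ∫ s in (0:ℝ)..T, r1 s :=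
        intervalIntegral_pos_of_pos (hr.intervalIntegrable 0 T) hrp hT
      have := Real.one_lt_exp_iff.2 h1
      linarith
    · exact intervalIntegral_pos_of_pos (hgcont.intervalIntegrable 0 T)
        (fun t => mul_pos (Real.exp_pos _) (hap t)) hT
  have hden : ∀ t ∈ Icc (0:ℝ) T,
      0 < 1 + p0c r1 a1 T * ∫ s in (0:ℝ)..t, Real.exp (∫ τ in (0:ℝ)..s, r1 τ) * a1 s := by
    intro t ht
    have hS : 0 ≤ ∫ s in (0:ℝ)..t, Real.exp (∫ τ in (0:ℝ)..s, r1 τ) * a1 s :=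
      intervalIntegral.integral_nonneg ht.1
        (fun u _ => le_of_lt (mul_pos (Real.exp_pos _) (hap u)))
    nlinarith
  have hpcont : ContinuousOn (fun t => pfun r1 a1 T t) (Icc 0 T) := by
    unfold pfun
    apply ContinuousOn.div
    · exact (continuous_const.mul (Real.continuous_exp.comp hRcont)).continuousOn
    · exact (continuous_const.add (continuous_const.mul hScont)).continuousOn
    · exact fun t ht => (hden t ht).ne'
  have hint : IntervalIntegrable (fun t => a1 t * pfun r1 a1 T t) volume 0 T := by
    apply ContinuousOn.intervalIntegrable
    rw [uIcc_of_le hT.le]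
    exact ha.continuousOn.mul hpcont
  refine intervalIntegral_pos_of_pos_on hint (fun t ht => ?_) hT
  have ht' : t ∈ Icc (0:ℝ) T := ⟨ht.1.le, ht.2.le⟩
  refine mul_pos (hap t) ?_
  unfold pfun
  exact div_pos (mul_pos hp0 (Real.exp_pos _)) (hden t ht')

theorem stmt3 (T : ℝ) (hT : 0 < T) (d1 r1 a1 J1 : ℝ → ℝ)
    (hd1 : Continuous d1 ∧ (∀ t, 0 < d1 t) ∧ ∀ t, d1 (t + T) = d1 t)
    (hr1 : Continuous r1 ∧ (∀ t, 0 < r1 t) ∧ ∀ t, r1 (t + T) = r1 t)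
    (ha1 : Continuous a1 ∧ (∀ t, 0 < a1 t) ∧ ∀ t, a1 (t + T) = a1 t)
    (hJ1 : Measurable J1 ∧ (∀ x, 0 ≤ J1 x) ∧ (∫ x, J1 x) = 1 ∧
      ∀ l : ℝ, Integrable fun x => J1 x * Real.exp (-l * x))
    (hJ1even : ∀ x, J1 x = J1 (-x))
    :
    0 < sInf ((fun μ : ℝ =>
      ((1 / T) * ∫ t in (0:ℝ)..T,
        (d1 t * ((∫ y, J1 y * Real.exp (-μ * y)) - 1) + a1 t * pfun r1 a1 T t)) / μ)
      '' Set.Ioi 0) := by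
  obtain ⟨hdc, hdp, -⟩ := hd1
  obtain ⟨hrc, hrp, -⟩ := hr1
  obtain ⟨hac, hap, -⟩ := ha1
  obtain ⟨hmeas, hnn, hint1, hintl⟩ := hJ1
  set C : ℝ := ∫ y, J1 y * min (y^2) 1 with hCdef
  have hC : 0 < C := Cpos J1 hmeas hnn hint1 hintl
  set D : ℝ := ∫ t in (0:ℝ)..T, d1 t with hDdef
  have hD : 0 < D := intervalIntegral_pos_of_pos (hdc.intervalIntegrable 0 T) hdp hT
  set A : ℝ := ∫ t in (0:ℝ)..T, a1 t * pfun r1 a1 T t with hAdef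
  have hA : 0 < A := Apos T hT r1 a1 hrc hrp hac hap
  -- integrability of a1 * pfun on [0,T]
  have hIA : IntervalIntegrable (fun t => a1 t * pfun r1 a1 T t) volume 0 T := by
    have hRcont : Continuous fun t => ∫ s in (0:ℝ)..t, r1 s :=
      intervalIntegral.continuous_primitive (fun a b => hrc.intervalIntegrable a b) 0
    have hgcont : Continuous fun s => Real.exp (∫ τ in (0:ℝ)..s, r1 τ) * a1 s :=
      (Real.continuous_exp.comp hRcont).mul hac
    have hScont : Continuous fun t => ∫ s in (0:ℝ)..t,
        Real.exp (∫ τ in (0:ℝ)..s, r1 τ) * a1 s :=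
      intervalIntegral.continuous_primitive (fun a b => hgcont.intervalIntegrable a b) 0
    have hden : ∀ t ∈ Icc (0:ℝ) T,
        0 < 1 + p0c r1 a1 T * ∫ s in (0:ℝ)..t, Real.exp (∫ τ in (0:ℝ)..s, r1 τ) * a1 s := by
      intro t ht
      have hS : 0 ≤ ∫ s in (0:ℝ)..t, Real.exp (∫ τ in (0:ℝ)..s, r1 τ) * a1 s :=
        intervalIntegral.integral_nonneg ht.1
          (fun u _ => le_of_lt (mul_pos (Real.exp_pos _) (hap u)))
      have hp0 : 0 < p0c r1 a1 T := by
        unfold p0c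
        apply div_pos
        · have h1 : 0 < ∫ s in (0:ℝ)..T, r1 s :=
            intervalIntegral_pos_of_pos (hrc.intervalIntegrable 0 T) hrp hT
          have := Real.one_lt_exp_iff.2 h1
          linarith
        · exact intervalIntegral_pos_of_pos (hgcont.intervalIntegrable 0 T)
            (fun t => mul_pos (Real.exp_pos _) (hap t)) hT
      nlinarith
    apply ContinuousOn.intervalIntegrable
    rw [uIcc_of_le hT.le]
    refine hac.continuousOn.mul ?_
    unfold pfun
    apply ContinuousOn.div
    · exact (continuous_const.mul (Real.continuous_exp.comp hRcont)).continuousOn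
    · exact (continuous_const.add (continuous_const.mul hScont)).continuousOn
    · exact fun t ht => (hden t ht).ne'
  set s : ℝ := Real.sqrt (2*C*D*A) with hsdef
  have hs2 : s^2 = 2*C*D*A := Real.sq_sqrt (by positivity)
  have hs : 0 < s := Real.sqrt_pos.2 (by positivity)
  have hc0 : 0 < s / T := by positivity
  refine lt_of_lt_of_le hc0 (le_csInf ⟨_, ⟨1, by norm_num, rfl⟩⟩ ?_)
  rintro b ⟨μ, hμ, rfl⟩
  simp only [Set.mem_Ioi] at hμ
  dsimp only
  -- compute the inner interval integral
  have hsplit : (∫ t in (0:ℝ)..T,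
      (d1 t * ((∫ y, J1 y * Real.exp (-μ * y)) - 1) + a1 t * pfun r1 a1 T t))
      = D * ((∫ y, J1 y * Real.exp (-μ * y)) - 1) + A := by
    rw [intervalIntegral.integral_add ((hdc.intervalIntegrable 0 T).mul_const _) hIA,
      intervalIntegral.integral_mul_const]
  have hkern : (μ^2/2) * C ≤ (∫ y, J1 y * Real.exp (-μ*y)) - 1 :=
    kern J1 hmeas hnn hint1 hintl hJ1even μ
  rw [hsplit]
  have key : s * μ ≤ μ^2*C*D/2 + A := by
    nlinarith [sq_nonneg (C*D*μ - s), mul_pos hC hD, hs.le, hμ]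
  rw [div_le_div_iff₀ hT (by positivity : (0:ℝ) < μ)]
  have hMd : (μ^2/2) * C * D ≤ ((∫ y, J1 y * Real.exp (-μ*y)) - 1) * D :=
    mul_le_mul_of_nonneg_right hkern hD.le
  have hTcanc : 1/T * (D * ((∫ y, J1 y * Real.exp (-μ*y)) - 1) + A) * T
      = D * ((∫ y, J1 y * Real.exp (-μ*y)) - 1) + A := by field_simp
  rw [hTcanc]
  nlinarith [key, hMd]
end

section
/- Assume: T > 0; d1, d2, r1, r2, a1, a2, b1, b2 : ℝ → ℝ are continuous, positive, T-periodic; the kernels J1, J2 are nonnegative, Lebesgue measurable, satisfy ∫_ℝ Ji(x) dx = 1 and ∫_ℝ Ji(x)e^{−λx} dx < ∞ for every λ ∈ ℝ. Let (φ⁻, ψ⁻) and (φ⁺, ψ⁺) be, respectively, a bounded lower solution and a bounded upper solution of the cooperative Cauchy system on ℝ × [0, ∞), taking values in [0,1] × [0,1]. If φ⁻(x,0) ≤ φ⁺(x,0) and ψ⁻(x,0) ≤ ψ⁺(x,0) for all x ∈ ℝ, then φ⁻(x,t) ≤ φ⁺(x,t) and ψ⁻(x,t) ≤ ψ⁺(x,t)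 for all (x,t) ∈ ℝ × [0, ∞). -/
open MeasureTheory Set Filter

/-- An upper solution of the cooperative Cauchy system on ℝ × (0, ∞). -/
def IsCauchyUpper (d1 d2 J1 J2 a1 b1 a2 b2 p q : ℝ → ℝ) (φ ψ : ℝ → ℝ → ℝ) : Prop :=
  Continuous (fun xt : ℝ × ℝ => φ xt.1 xt.2) ∧
  Continuous (fun xt : ℝ × ℝ => ψ xt.1 xt.2) ∧
  ∀ x t : ℝ, 0 < t →
    ∃ φt ψt : ℝ,
      HasDerivAt (fun s => φ x s) φt t ∧ HasDerivAt (fun s => ψ x s) ψt t ∧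
      d1 t * ((∫ y, J1 y * φ (x - y) t) - φ x t) +
        φ x t * (a1 t * p t * (1 - φ x t) - b1 t * q t * (1 - ψ x t)) ≤ φt ∧
      d2 t * ((∫ y, J2 y * ψ (x - y) t) - ψ x t) +
        (1 - ψ x t) * (a2 t * p t * φ x t - b2 t * q t * ψ x t) ≤ ψt

/-- A lower solution of the cooperative Cauchy system on ℝ × (0, ∞). -/
def IsCauchyLower (d1 d2 J1 J2 a1 b1 a2 b2 p q : ℝ → ℝ) (φ ψ : ℝ → ℝ → ℝ) : Prop :=
  Continuous (fun xt : ℝ × ℝ => φ xt.1 xt.2) ∧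
  Continuous (fun xt : ℝ × ℝ => ψ xt.1 xt.2) ∧
  ∀ x t : ℝ, 0 < t →
    ∃ φt ψt : ℝ,
      HasDerivAt (fun s => φ x s) φt t ∧ HasDerivAt (fun s => ψ x s) ψt t ∧
      φt ≤ d1 t * ((∫ y, J1 y * φ (x - y) t) - φ x t) +
        φ x t * (a1 t * p t * (1 - φ x t) - b1 t * q t * (1 - ψ x t)) ∧
      ψt ≤ d2 t * ((∫ y, J2 y * ψ (x - y) t) - ψ x t) +
        (1 - ψ x t) * (a2 t * p t * φ x t - b2 t * q t * ψ x t)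

lemma p0c_pos {r a : ℝ → ℝ} {T : ℝ} (hT : 0 < T) (hr : Continuous r)
    (hrp : ∀ t, 0 < r t) (ha : Continuous a) (hap : ∀ t, 0 < a t) :
    0 < p0c r a T := by
  have h1 : 0 < ∫ s in (0:ℝ)..T, r s :=
    intervalIntegral.intervalIntegral_pos_of_pos_on (hr.intervalIntegrable _ _)
      (fun x _ => hrp x) hT
  have hcont : Continuous fun s => Real.exp (∫ τ in (0:ℝ)..s, r τ) * a s :=
    ((intervalIntegral.continuous_primitive (fun a b => hr.intervalIntegrable a b) 0).rexp).mul ha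
  have h2 : 0 < ∫ s in (0:ℝ)..T, Real.exp (∫ τ in (0:ℝ)..s, r τ) * a s :=
    intervalIntegral.intervalIntegral_pos_of_pos_on (hcont.intervalIntegrable _ _)
      (fun x _ => mul_pos (Real.exp_pos _) (hap x)) hT
  exact div_pos (by linarith [Real.one_lt_exp_iff.mpr h1]) h2

lemma pfun_nonneg {r a : ℝ → ℝ} {T : ℝ} (hT : 0 < T) (hr : Continuous r)
    (hrp : ∀ t, 0 < r t) (ha : Continuous a) (hap : ∀ t, 0 < a t)
    {t : ℝ} (ht : 0 ≤ t) : 0 ≤ pfun r a T t := by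
  have hp0 := p0c_pos hT hr hrp ha hap
  have hG : 0 ≤ ∫ s in (0:ℝ)..t, Real.exp (∫ τ in (0:ℝ)..s, r τ) * a s :=
    intervalIntegral.integral_nonneg ht
      (fun u _ => (mul_pos (Real.exp_pos _) (hap u)).le)
  have hden : (0:ℝ) < 1 + p0c r a T * ∫ s in (0:ℝ)..t, Real.exp (∫ τ in (0:ℝ)..s, r τ) * a s := by
    nlinarith
  exact div_nonneg (mul_nonneg hp0.le (Real.exp_pos _).le) hden.le

lemma pfun_le {r a : ℝ → ℝ} {T : ℝ} (hT : 0 < T) (hr : Continuous r)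
    (hrp : ∀ t, 0 < r t) (ha : Continuous a) (hap : ∀ t, 0 < a t)
    {t t0 : ℝ} (ht : 0 ≤ t) (ht0 : t ≤ t0) :
    pfun r a T t ≤ p0c r a T * Real.exp (∫ s in (0:ℝ)..t0, r s) := by
  have hp0 := p0c_pos hT hr hrp ha hap
  have hG : 0 ≤ ∫ s in (0:ℝ)..t, Real.exp (∫ τ in (0:ℝ)..s, r τ) * a s :=
    intervalIntegral.integral_nonneg ht
      (fun u _ => (mul_pos (Real.exp_pos _) (hap u)).le)
  have h1 : pfun r a T t ≤ p0c r a T * Real.exp (∫ s in (0:ℝ)..t, r s) :=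
    div_le_self (mul_nonneg hp0.le (Real.exp_pos _).le) (by nlinarith)
  refine h1.trans ?_
  have hadd : (∫ s in (0:ℝ)..t, r s) + ∫ s in t..t0, r s = ∫ s in (0:ℝ)..t0, r s :=
    intervalIntegral.integral_add_adjacent_intervals (hr.intervalIntegrable _ _)
      (hr.intervalIntegrable _ _)
  have h2 : (∫ s in (0:ℝ)..t, r s) ≤ ∫ s in (0:ℝ)..t0, r s := by
    have : 0 ≤ ∫ s in t..t0, r s :=
      intervalIntegral.integral_nonneg ht0 (fun u _ => (hrp u).le)
    linarith
  exact mul_le_mul_of_nonneg_left (Real.exp_le_exp.mpr h2) hp0.le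

lemma aux_integrable {J f : ℝ → ℝ} (hJi : Integrable J) (hf : Continuous f)
    (hfb : ∀ y, |f y| ≤ 1) : Integrable fun y => J y * f y := by
  have := hJi.bdd_mul hf.aestronglyMeasurable (c := 1) (Filter.Eventually.of_forall fun y => by simpa using hfb y)
  simpa [mul_comm] using this

lemma aux_integral_le {J f : ℝ → ℝ} (hJi : Integrable J) (hJnn : ∀ x, 0 ≤ J x)
    (hJone : (∫ x, J x) = 1) (hf : Continuous f) (hfb : ∀ y, |f y| ≤ 1)
    {C : ℝ} (hfle : ∀ y, f y ≤ C) : (∫ y, J y * f y) ≤ C := by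
  have h1 : (∫ y, J y * f y) ≤ ∫ y, J y * C :=
    integral_mono (aux_integrable hJi hf hfb) (hJi.mul_const C)
      (fun y => mul_le_mul_of_nonneg_left (hfle y) (hJnn y))
  calc (∫ y, J y * f y) ≤ ∫ y, J y * C := h1
    _ = (∫ y, J y) * C := integral_mul_const C J
    _ = C := by rw [hJone, one_mul]

set_option maxHeartbeats 1000000 in
theorem stmt5 (T : ℝ) (hT : 0 < T)
    (d1 d2 r1 r2 a1 a2 b1 b2 J1 J2 : ℝ → ℝ)
    (hd1 : Continuous d1 ∧ (∀ t, 0 < d1 t) ∧ ∀ t, d1 (t + T) = d1 t)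
    (hd2 : Continuous d2 ∧ (∀ t, 0 < d2 t) ∧ ∀ t, d2 (t + T) = d2 t)
    (hr1 : Continuous r1 ∧ (∀ t, 0 < r1 t) ∧ ∀ t, r1 (t + T) = r1 t)
    (hr2 : Continuous r2 ∧ (∀ t, 0 < r2 t) ∧ ∀ t, r2 (t + T) = r2 t)
    (ha1 : Continuous a1 ∧ (∀ t, 0 < a1 t) ∧ ∀ t, a1 (t + T) = a1 t)
    (ha2 : Continuous a2 ∧ (∀ t, 0 < a2 t) ∧ ∀ t, a2 (t + T) = a2 t)
    (hb1 : Continuous b1 ∧ (∀ t, 0 < b1 t) ∧ ∀ t, b1 (t + T) = b1 t)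
    (hb2 : Continuous b2 ∧ (∀ t, 0 < b2 t) ∧ ∀ t, b2 (t + T) = b2 t)
    (hJ1 : Measurable J1 ∧ (∀ x, 0 ≤ J1 x) ∧ (∫ x, J1 x) = 1 ∧
      ∀ l : ℝ, Integrable fun x => J1 x * Real.exp (-l * x))
    (hJ2 : Measurable J2 ∧ (∀ x, 0 ≤ J2 x) ∧ (∫ x, J2 x) = 1 ∧
      ∀ l : ℝ, Integrable fun x => J2 x * Real.exp (-l * x))
    (φm ψm φp ψp : ℝ → ℝ → ℝ)
    (hlow : IsCauchyLower d1 d2 J1 J2 a1 b1 a2 b2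
      (fun t => pfun r1 a1 T t) (fun t => pfun r2 b2 T t) φm ψm)
    (hup : IsCauchyUpper d1 d2 J1 J2 a1 b1 a2 b2
      (fun t => pfun r1 a1 T t) (fun t => pfun r2 b2 T t) φp ψp)
    (hm01 : ∀ x t, φm x t ∈ Set.Icc (0:ℝ) 1 ∧ ψm x t ∈ Set.Icc (0:ℝ) 1)
    (hp01 : ∀ x t, φp x t ∈ Set.Icc (0:ℝ) 1 ∧ ψp x t ∈ Set.Icc (0:ℝ) 1)
    (hinit : ∀ x : ℝ, φm x 0 ≤ φp x 0 ∧ ψm x 0 ≤ ψp x 0) :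
    ∀ x t : ℝ, 0 ≤ t → φm x t ≤ φp x t ∧ ψm x t ≤ ψp x t := by
  obtain ⟨hd1c, hd1p, -⟩ := hd1
  obtain ⟨hd2c, hd2p, -⟩ := hd2
  obtain ⟨hr1c, hr1p, -⟩ := hr1
  obtain ⟨hr2c, hr2p, -⟩ := hr2
  obtain ⟨ha1c, ha1p, -⟩ := ha1
  obtain ⟨ha2c, ha2p, -⟩ := ha2
  obtain ⟨hb1c, hb1p, -⟩ := hb1
  obtain ⟨hb2c, hb2p, -⟩ := hb2
  obtain ⟨hJ1m, hJ1nn, hJ1one, hJ1int⟩ := hJ1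
  obtain ⟨hJ2m, hJ2nn, hJ2one, hJ2int⟩ := hJ2
  have hJ1i : Integrable J1 := by simpa using hJ1int 0
  have hJ2i : Integrable J2 := by simpa using hJ2int 0
  obtain ⟨hmc1, hmc2, hlow3⟩ := hlow
  obtain ⟨hpc1, hpc2, hup3⟩ := hup
  intro x t ht
  -- bounds for pfun on [0,t]
  set Pb := p0c r1 a1 T * Real.exp (∫ s in (0:ℝ)..t, r1 s) with hPb
  set Qb := p0c r2 b2 T * Real.exp (∫ s in (0:ℝ)..t, r2 s) with hQb
  have hPbpos : 0 < Pb := mul_pos (p0c_pos hT hr1c hr1p ha1c ha1p) (Real.exp_pos _)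
  have hQbpos : 0 < Qb := mul_pos (p0c_pos hT hr2c hr2p hb2c hb2p) (Real.exp_pos _)
  have hpfun1 : ∀ s, s ∈ Icc (0:ℝ) t → 0 ≤ pfun r1 a1 T s ∧ pfun r1 a1 T s ≤ Pb :=
    fun s hs => ⟨pfun_nonneg hT hr1c hr1p ha1c ha1p hs.1,
      pfun_le hT hr1c hr1p ha1c ha1p hs.1 hs.2⟩
  have hpfun2 : ∀ s, s ∈ Icc (0:ℝ) t → 0 ≤ pfun r2 b2 T s ∧ pfun r2 b2 T s ≤ Qb :=
    fun s hs => ⟨pfun_nonneg hT hr2c hr2p hb2c hb2p hs.1,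
      pfun_le hT hr2c hr2p hb2c hb2p hs.1 hs.2⟩
  -- a uniform bound K on all coefficients
  obtain ⟨K0, hK0⟩ := (isCompact_Icc (a := (0:ℝ)) (b := t)).exists_bound_of_continuousOn
      (f := fun s => d1 s + d2 s + (a1 s + a2 s) * Pb + (b1 s + b2 s) * Qb)
      (((hd1c.add hd2c).add ((ha1c.add ha2c).mul continuous_const)).add
        ((hb1c.add hb2c).mul continuous_const)).continuousOn
  set K := max K0 1 with hK
  have hK1 : (1:ℝ) ≤ K := le_max_right _ _
  have hKpos : (0:ℝ) < K := lt_of_lt_of_le one_pos hK1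
  have hcoef : ∀ s ∈ Icc (0:ℝ) t, d1 s ≤ K ∧ d2 s ≤ K ∧ a1 s * pfun r1 a1 T s ≤ K ∧
      b1 s * pfun r2 b2 T s ≤ K ∧ a2 s * pfun r1 a1 T s ≤ K ∧ b2 s * pfun r2 b2 T s ≤ K := by
    intro s hs
    have h := hK0 s hs
    rw [Real.norm_eq_abs] at h
    have hfs : d1 s + d2 s + (a1 s + a2 s) * Pb + (b1 s + b2 s) * Qb ≤ K :=
      le_trans (le_trans (le_abs_self _) h) (le_max_left _ _)
    have hp1 := hpfun1 s hs
    have hp2 := hpfun2 s hs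
    have e1 := hd1p s; have e2 := hd2p s; have e3 := ha1p s; have e4 := ha2p s
    have e5 := hb1p s; have e6 := hb2p s
    have m1 := mul_pos e3 hPbpos
    have m2 := mul_pos e4 hPbpos
    have m3 := mul_pos e5 hQbpos
    have m4 := mul_pos e6 hQbpos
    have n1 := mul_le_mul_of_nonneg_left hp1.2 e3.le
    have n2 := mul_le_mul_of_nonneg_left hp1.2 e4.le
    have n3 := mul_le_mul_of_nonneg_left hp2.2 e5.le
    have n4 := mul_le_mul_of_nonneg_left hp2.2 e6.le
    refine ⟨?_, ?_, ?_, ?_, ?_, ?_⟩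
    · linarith only [hfs, e2, m1, m2, m3, m4]
    · linarith only [hfs, e1, m1, m2, m3, m4]
    · linarith only [hfs, e1, e2, m2, m3, m4, n1]
    · linarith only [hfs, e1, e2, m1, m2, m4, n3]
    · linarith only [hfs, e1, e2, m1, m3, m4, n2]
    · linarith only [hfs, e1, e2, m1, m2, m3, n4]
  set L := 3*K + 1 with hL
  have hLpos : (0:ℝ) < L := by rw [hL]; linarith only [hKpos]
  set w : ℝ → ℝ → ℝ := fun a b => Real.exp (-L*b) * (φm a b - φp a b) with hwdef
  set z : ℝ → ℝ → ℝ := fun a b => Real.exp (-L*b) * (ψm a b - ψp a b) with hzdef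
  have hwz1 : ∀ a b : ℝ, 0 ≤ b → w a b ≤ 1 ∧ z a b ≤ 1 := by
    intro a b hb
    have hE : Real.exp (-L*b) ≤ 1 := Real.exp_le_one_iff.mpr
      (by nlinarith only [hLpos, hb])
    have hEp : (0:ℝ) < Real.exp (-L*b) := Real.exp_pos _
    have h1 := (hm01 a b).1.1; have h2 := (hm01 a b).1.2
    have h3 := (hm01 a b).2.1; have h4 := (hm01 a b).2.2
    have h5 := (hp01 a b).1.1; have h6 := (hp01 a b).1.2
    have h7 := (hp01 a b).2.1; have h8 := (hp01 a b).2.2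
    constructor
    · simp only [hwdef]
      have hx := mul_nonneg hEp.le (show (0:ℝ) ≤ 1 - (φm a b - φp a b) by
        linarith only [h2, h5])
      linarith only [hx, hE]
    · simp only [hzdef]
      have hx := mul_nonneg hEp.le (show (0:ℝ) ≤ 1 - (ψm a b - ψp a b) by
        linarith only [h4, h7])
      linarith only [hx, hE]
  set SS : Set ℝ :=
    insert 0 ((fun pr : ℝ × ℝ => max (w pr.1 pr.2) (z pr.1 pr.2)) '' (univ ×ˢ Icc 0 t)) with hSS
  have hSSne : SS.Nonempty := ⟨0, mem_insert _ _⟩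
  have hSSbdd : BddAbove SS := by
    refine ⟨1, ?_⟩
    rintro m (rfl | ⟨⟨a, b⟩, hab, rfl⟩)
    · exact zero_le_one
    · exact max_le (hwz1 a b hab.2.1).1 (hwz1 a b hab.2.1).2
  set M := sSup SS with hM
  have hM0 : 0 ≤ M := le_csSup hSSbdd (mem_insert _ _)
  have hwM : ∀ a b : ℝ, b ∈ Icc (0:ℝ) t → w a b ≤ M ∧ z a b ≤ M := by
    intro a b hb
    have hmem : max (w a b) (z a b) ∈ SS :=
      mem_insert_of_mem _ ⟨(a, b), ⟨mem_univ _, hb⟩, rfl⟩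
    exact ⟨le_trans (le_max_left _ _) (le_csSup hSSbdd hmem),
      le_trans (le_max_right _ _) (le_csSup hSSbdd hmem)⟩
  have hMle : M ≤ 0 := by
    by_contra hMc
    push_neg at hMc
    set δ := M / (2*(L+K+1)) with hδ
    have hden : (0:ℝ) < 2*(L+K+1) := by linarith only [hLpos, hKpos]
    have hδpos : 0 < δ := div_pos hMc hden
    have hδlt : δ < M := by
      rw [hδ, div_lt_iff₀ hden]
      have := mul_pos hMc (show (0:ℝ) < 2*L+2*K+1 by linarith only [hLpos, hKpos])
      linarith only [this]
    have hδK : (L+K)*δ ≤ M/2 := by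
      have h2 : (L+K) * δ = (L+K)*M / (2*(L+K+1)) := by rw [hδ]; ring
      rw [h2, div_le_div_iff₀ hden two_pos]
      linarith only [hMc]
    -- key derivative bound for the first component
    have key1 : ∀ (a : ℝ) (s : ℝ), 0 < s → s ≤ t → M - δ ≤ w a s →
        ∃ ws, HasDerivAt (fun u => w a u) ws s ∧ ws ≤ -(M/2) := by
      intro a s hs0 hst hwge
      have hsI : s ∈ Icc (0:ℝ) t := ⟨hs0.le, hst⟩
      obtain ⟨φmt, ψmt, hdm1, hdm2, hle1, hle2⟩ := hlow3 a s hs0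
      obtain ⟨φpt, ψpt, hdp1, hdp2, hge1, hge2⟩ := hup3 a s hs0
      beta_reduce at hle1 hge1
      have hE0 : (0:ℝ) < Real.exp (-L*s) := Real.exp_pos _
      have hE1 : Real.exp (-L*s) ≤ 1 := Real.exp_le_one_iff.mpr
        (by nlinarith only [hLpos, hs0])
      have hdE : HasDerivAt (fun u : ℝ => Real.exp (-L*u)) (-L * Real.exp (-L*s)) s := by
        have h1 : HasDerivAt (fun u : ℝ => -L*u) (-L) s := by
          simpa using (hasDerivAt_id s).const_mul (-L)
        simpa [mul_comm] using h1.exp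
      have hdw : HasDerivAt (fun u => w a u)
          ((-L * Real.exp (-L*s)) * (φm a s - φp a s) + Real.exp (-L*s) * (φmt - φpt)) s := by
        simp only [hwdef]
        exact hdE.mul (hdm1.sub hdp1)
      refine ⟨_, hdw, ?_⟩
      -- integrability and the integral bound
      have hcφm : Continuous fun y => φm (a - y) s :=
        hmc1.comp ((continuous_const.sub continuous_id).prodMk continuous_const)
      have hcφp : Continuous fun y => φp (a - y) s :=
        hpc1.comp ((continuous_const.sub continuous_id).prodMk continuous_const)
      have hbφm : ∀ y, |φm (a - y) s| ≤ 1 := fun y =>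
        abs_le.mpr ⟨by linarith only [(hm01 (a-y) s).1.1], (hm01 (a-y) s).1.2⟩
      have hbφp : ∀ y, |φp (a - y) s| ≤ 1 := fun y =>
        abs_le.mpr ⟨by linarith only [(hp01 (a-y) s).1.1], (hp01 (a-y) s).1.2⟩
      have hInm : Integrable fun y => J1 y * φm (a - y) s := aux_integrable hJ1i hcφm hbφm
      have hInp : Integrable fun y => J1 y * φp (a - y) s := aux_integrable hJ1i hcφp hbφp
      have hIMle : Real.exp (-L*s) *
          ((∫ y, J1 y * φm (a - y) s) - ∫ y, J1 y * φp (a - y) s) ≤ M := by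
        have heq : Real.exp (-L*s) *
            ((∫ y, J1 y * φm (a - y) s) - ∫ y, J1 y * φp (a - y) s)
            = ∫ y, J1 y * (Real.exp (-L*s) * (φm (a - y) s - φp (a - y) s)) := by
          rw [show (fun y => J1 y * (Real.exp (-L*s) * (φm (a - y) s - φp (a - y) s)))
              = fun y => Real.exp (-L*s) * (J1 y * φm (a - y) s - J1 y * φp (a - y) s)
              from funext fun y => by ring,
            integral_const_mul, integral_sub hInm hInp]
        rw [heq]
        refine aux_integral_le hJ1i hJ1nn hJ1one
          (continuous_const.mul (hcφm.sub hcφp)) ?_ ?_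
        · intro y
          have h1 := (hm01 (a-y) s).1.1; have h2 := (hm01 (a-y) s).1.2
          have h3 := (hp01 (a-y) s).1.1; have h4 := (hp01 (a-y) s).1.2
          have k1 := mul_nonneg hE0.le
            (show (0:ℝ) ≤ 1 - (φm (a-y) s - φp (a-y) s) by linarith only [h2, h3])
          have k2 := mul_nonneg hE0.le
            (show (0:ℝ) ≤ (φm (a-y) s - φp (a-y) s) + 1 by linarith only [h1, h4])
          simp only [Pi.mul_apply, Pi.sub_apply]
          rw [abs_le]
          constructor
          · linarith only [k2, hE1]
          · linarith only [k1, hE1]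
        · intro y
          have hh := (hwM (a - y) s hsI).1
          simpa [hwdef] using hh
      -- abbreviations
      simp only [hwdef] at hwge
      have hW2 := (hwM a s hsI).1
      have hZ2 := (hwM a s hsI).2
      simp only [hwdef] at hW2
      simp only [hzdef] at hZ2
      have hA0 := (hm01 a s).1.1; have hA1 := (hm01 a s).1.2
      have hB0 := (hm01 a s).2.1; have hB1 := (hm01 a s).2.2
      have hC0 := (hp01 a s).1.1; have hC1 := (hp01 a s).1.2
      have hD0 := (hp01 a s).2.1; have hD1 := (hp01 a s).2.2
      set E := Real.exp (-L*s) with hEdef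
      set vA := φm a s with hvA
      set vB := ψm a s with hvB
      set vC := φp a s with hvC
      set vD := ψp a s with hvD
      set Im := ∫ y, J1 y * φm (a - y) s with hIm
      set Ip := ∫ y, J1 y * φp (a - y) s with hIp
      set P1 := a1 s * pfun r1 a1 T s with hP1
      set Q1 := b1 s * pfun r2 b2 T s with hQ1
      have hP10 : 0 ≤ P1 := mul_nonneg (ha1p s).le (hpfun1 s hsI).1
      have hQ10 : 0 ≤ Q1 := mul_nonneg (hb1p s).le (hpfun2 s hsI).1
      have hP1K : P1 ≤ K := (hcoef s hsI).2.2.1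
      have hQ1K : Q1 ≤ K := (hcoef s hsI).2.2.2.1
      have hd1K : d1 s ≤ K := (hcoef s hsI).1
      have hd1pos := hd1p s
      -- the differential inequality
      have hut : φmt - φpt ≤
          (d1 s * (Im - vA) + vA * (P1 * (1 - vA) - Q1 * (1 - vB)))
          - (d1 s * (Ip - vC) + vC * (P1 * (1 - vC) - Q1 * (1 - vD))) :=
        sub_le_sub hle1 hge1
      have hE2 : E * (φmt - φpt) ≤
          E * ((d1 s * (Im - vA) + vA * (P1 * (1 - vA) - Q1 * (1 - vB)))
          - (d1 s * (Ip - vC) + vC * (P1 * (1 - vC) - Q1 * (1 - vD)))) :=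
        mul_le_mul_of_nonneg_left hut hE0.le
      have hring : E * ((d1 s * (Im - vA) + vA * (P1 * (1 - vA) - Q1 * (1 - vB)))
          - (d1 s * (Ip - vC) + vC * (P1 * (1 - vC) - Q1 * (1 - vD))))
          = d1 s * (E*(Im - Ip) - E*(vA - vC)) + P1 * ((E*(vA - vC)) * (1 - vA - vC))
            - Q1 * ((1 - vB) * (E*(vA - vC))) + Q1 * (vC * (E*(vB - vD))) := by ring
      rw [hring] at hE2
      have hWpos : 0 < E * (vA - vC) :=
        lt_of_lt_of_le (by linarith only [hδlt]) hwge
      have t1 : d1 s * (E*(Im - Ip) - E*(vA - vC)) ≤ K * δ := by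
        have hX : E*(Im - Ip) - E*(vA - vC) ≤ δ := by linarith only [hIMle, hwge]
        have u1 := mul_nonneg (sub_nonneg.mpr hd1K) hδpos.le
        have u2 := mul_nonneg hd1pos.le (sub_nonneg.mpr hX)
        linarith only [u1, u2]
      have t2 : P1 * ((E*(vA - vC)) * (1 - vA - vC)) ≤ K * M := by
        have h1 : (E*(vA - vC)) * (1 - vA - vC) ≤ E*(vA - vC) := by
          have u1 := mul_nonneg hWpos.le (show (0:ℝ) ≤ vA + vC by linarith only [hA0, hC0])
          linarith only [u1]
        calc P1 * ((E*(vA - vC)) * (1 - vA - vC)) ≤ P1 * (E*(vA - vC)) :=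
              mul_le_mul_of_nonneg_left h1 hP10
          _ ≤ K * M := mul_le_mul hP1K hW2 hWpos.le hKpos.le
      have t3 : 0 ≤ Q1 * ((1 - vB) * (E*(vA - vC))) :=
        mul_nonneg hQ10 (mul_nonneg (by linarith only [hB1]) hWpos.le)
      have t4 : Q1 * (vC * (E*(vB - vD))) ≤ K * M := by
        have hc0 : 0 ≤ Q1 * vC := mul_nonneg hQ10 hC0
        have hcK : Q1 * vC ≤ K := by
          have u1 := mul_le_mul_of_nonneg_left hC1 hQ10
          linarith only [u1, hQ1K]
        have u1 := mul_nonneg hc0 (sub_nonneg.mpr hZ2)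
        have u2 := mul_nonneg (sub_nonneg.mpr hcK) hMc.le
        linarith only [u1, u2]
      have hsum : E * (φmt - φpt) ≤ K*δ + K*M + K*M := by
        linarith only [hE2, t1, t2, t3, t4]
      have h9 : (-L * E) * (vA - vC) ≤ -(L*(M - δ)) := by
        have u1 := mul_le_mul_of_nonneg_left hwge hLpos.le
        linarith only [u1]
      have h10 : -(L*(M - δ)) + (K*δ + K*M + K*M) ≤ -(M/2) := by
        have hKM := mul_nonneg hKpos.le hMc.le
        simp only [hL] at hδK ⊢
        linarith only [hδK, hKM]
      exact le_trans (add_le_add h9 hsum) h10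
    -- key derivative bound for the second component
    have key2 : ∀ (a : ℝ) (s : ℝ), 0 < s → s ≤ t → M - δ ≤ z a s →
        ∃ zs, HasDerivAt (fun u => z a u) zs s ∧ zs ≤ -(M/2) := by
      intro a s hs0 hst hzge
      have hsI : s ∈ Icc (0:ℝ) t := ⟨hs0.le, hst⟩
      obtain ⟨φmt, ψmt, hdm1, hdm2, hle1, hle2⟩ := hlow3 a s hs0
      obtain ⟨φpt, ψpt, hdp1, hdp2, hge1, hge2⟩ := hup3 a s hs0
      beta_reduce at hle2 hge2
      have hE0 : (0:ℝ) < Real.exp (-L*s) := Real.exp_pos _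
      have hE1 : Real.exp (-L*s) ≤ 1 := Real.exp_le_one_iff.mpr
        (by nlinarith only [hLpos, hs0])
      have hdE : HasDerivAt (fun u : ℝ => Real.exp (-L*u)) (-L * Real.exp (-L*s)) s := by
        have h1 : HasDerivAt (fun u : ℝ => -L*u) (-L) s := by
          simpa using (hasDerivAt_id s).const_mul (-L)
        simpa [mul_comm] using h1.exp
      have hdz : HasDerivAt (fun u => z a u)
          ((-L * Real.exp (-L*s)) * (ψm a s - ψp a s) + Real.exp (-L*s) * (ψmt - ψpt)) s := by
        simp only [hzdef]
        exact hdE.mul (hdm2.sub hdp2)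
      refine ⟨_, hdz, ?_⟩
      have hcψm : Continuous fun y => ψm (a - y) s :=
        hmc2.comp ((continuous_const.sub continuous_id).prodMk continuous_const)
      have hcψp : Continuous fun y => ψp (a - y) s :=
        hpc2.comp ((continuous_const.sub continuous_id).prodMk continuous_const)
      have hbψm : ∀ y, |ψm (a - y) s| ≤ 1 := fun y =>
        abs_le.mpr ⟨by linarith only [(hm01 (a-y) s).2.1], (hm01 (a-y) s).2.2⟩
      have hbψp : ∀ y, |ψp (a - y) s| ≤ 1 := fun y =>
        abs_le.mpr ⟨by linarith only [(hp01 (a-y) s).2.1], (hp01 (a-y) s).2.2⟩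
      have hInm : Integrable fun y => J2 y * ψm (a - y) s := aux_integrable hJ2i hcψm hbψm
      have hInp : Integrable fun y => J2 y * ψp (a - y) s := aux_integrable hJ2i hcψp hbψp
      have hIMle : Real.exp (-L*s) *
          ((∫ y, J2 y * ψm (a - y) s) - ∫ y, J2 y * ψp (a - y) s) ≤ M := by
        have heq : Real.exp (-L*s) *
            ((∫ y, J2 y * ψm (a - y) s) - ∫ y, J2 y * ψp (a - y) s)
            = ∫ y, J2 y * (Real.exp (-L*s) * (ψm (a - y) s - ψp (a - y) s)) := by
          rw [show (fun y => J2 y * (Real.exp (-L*s) * (ψm (a - y) s - ψp (a - y) s)))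
              = fun y => Real.exp (-L*s) * (J2 y * ψm (a - y) s - J2 y * ψp (a - y) s)
              from funext fun y => by ring,
            integral_const_mul, integral_sub hInm hInp]
        rw [heq]
        refine aux_integral_le hJ2i hJ2nn hJ2one
          (continuous_const.mul (hcψm.sub hcψp)) ?_ ?_
        · intro y
          have h1 := (hm01 (a-y) s).2.1; have h2 := (hm01 (a-y) s).2.2
          have h3 := (hp01 (a-y) s).2.1; have h4 := (hp01 (a-y) s).2.2
          have k1 := mul_nonneg hE0.le
            (show (0:ℝ) ≤ 1 - (ψm (a-y) s - ψp (a-y) s) by linarith only [h2, h3])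
          have k2 := mul_nonneg hE0.le
            (show (0:ℝ) ≤ (ψm (a-y) s - ψp (a-y) s) + 1 by linarith only [h1, h4])
          simp only [Pi.mul_apply, Pi.sub_apply]
          rw [abs_le]
          constructor
          · linarith only [k2, hE1]
          · linarith only [k1, hE1]
        · intro y
          have hh := (hwM (a - y) s hsI).2
          simpa [hzdef] using hh
      simp only [hzdef] at hzge
      have hW2 := (hwM a s hsI).1
      have hZ2 := (hwM a s hsI).2
      simp only [hwdef] at hW2
      simp only [hzdef] at hZ2
      have hA0 := (hm01 a s).1.1; have hA1 := (hm01 a s).1.2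
      have hB0 := (hm01 a s).2.1; have hB1 := (hm01 a s).2.2
      have hC0 := (hp01 a s).1.1; have hC1 := (hp01 a s).1.2
      have hD0 := (hp01 a s).2.1; have hD1 := (hp01 a s).2.2
      set E := Real.exp (-L*s) with hEdef
      set vA := φm a s with hvA
      set vB := ψm a s with hvB
      set vC := φp a s with hvC
      set vD := ψp a s with hvD
      set Jm := ∫ y, J2 y * ψm (a - y) s with hJm
      set Jp := ∫ y, J2 y * ψp (a - y) s with hJp
      set P2 := a2 s * pfun r1 a1 T s with hP2
      set Q2 := b2 s * pfun r2 b2 T s with hQ2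
      have hP20 : 0 ≤ P2 := mul_nonneg (ha2p s).le (hpfun1 s hsI).1
      have hQ20 : 0 ≤ Q2 := mul_nonneg (hb2p s).le (hpfun2 s hsI).1
      have hP2K : P2 ≤ K := (hcoef s hsI).2.2.2.2.1
      have hQ2K : Q2 ≤ K := (hcoef s hsI).2.2.2.2.2
      have hd2K : d2 s ≤ K := (hcoef s hsI).2.1
      have hd2pos := hd2p s
      have hut : ψmt - ψpt ≤
          (d2 s * (Jm - vB) + (1 - vB) * (P2 * vA - Q2 * vB))
          - (d2 s * (Jp - vD) + (1 - vD) * (P2 * vC - Q2 * vD)) :=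
        sub_le_sub hle2 hge2
      have hE2 : E * (ψmt - ψpt) ≤
          E * ((d2 s * (Jm - vB) + (1 - vB) * (P2 * vA - Q2 * vB))
          - (d2 s * (Jp - vD) + (1 - vD) * (P2 * vC - Q2 * vD))) :=
        mul_le_mul_of_nonneg_left hut hE0.le
      have hring : E * ((d2 s * (Jm - vB) + (1 - vB) * (P2 * vA - Q2 * vB))
          - (d2 s * (Jp - vD) + (1 - vD) * (P2 * vC - Q2 * vD)))
          = d2 s * (E*(Jm - Jp) - E*(vB - vD)) + P2 * ((1 - vB) * (E*(vA - vC)))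
            - P2 * (vC * (E*(vB - vD))) - Q2 * ((E*(vB - vD)) * (1 - vB - vD)) := by ring
      rw [hring] at hE2
      have hZpos : 0 < E * (vB - vD) :=
        lt_of_lt_of_le (by linarith only [hδlt]) hzge
      have t1 : d2 s * (E*(Jm - Jp) - E*(vB - vD)) ≤ K * δ := by
        have hX : E*(Jm - Jp) - E*(vB - vD) ≤ δ := by linarith only [hIMle, hzge]
        have u1 := mul_nonneg (sub_nonneg.mpr hd2K) hδpos.le
        have u2 := mul_nonneg hd2pos.le (sub_nonneg.mpr hX)
        linarith only [u1, u2]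
      have t2 : P2 * ((1 - vB) * (E*(vA - vC))) ≤ K * M := by
        have h1 : (1 - vB) * (E*(vA - vC)) ≤ M := by
          have u1 := mul_nonneg (show (0:ℝ) ≤ 1 - vB by linarith only [hB1])
            (sub_nonneg.mpr hW2)
          have u2 := mul_nonneg hB0 hM0
          linarith only [u1, u2]
        have u3 := mul_nonneg hP20 (sub_nonneg.mpr h1)
        have u4 := mul_nonneg (sub_nonneg.mpr hP2K) hM0
        linarith only [u3, u4]
      have t3 : 0 ≤ P2 * (vC * (E*(vB - vD))) :=
        mul_nonneg hP20 (mul_nonneg hC0 hZpos.le)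
      have t4 : -(Q2 * ((E*(vB - vD)) * (1 - vB - vD))) ≤ K * M := by
        have h1 : -((E*(vB - vD)) * (1 - vB - vD)) ≤ E*(vB - vD) := by
          have u1 := mul_nonneg hZpos.le
            (show (0:ℝ) ≤ 2 - vB - vD by linarith only [hB1, hD1])
          linarith only [u1]
        calc -(Q2 * ((E*(vB - vD)) * (1 - vB - vD)))
            = Q2 * (-((E*(vB - vD)) * (1 - vB - vD))) := by ring
          _ ≤ Q2 * (E*(vB - vD)) := mul_le_mul_of_nonneg_left h1 hQ20
          _ ≤ K * M := mul_le_mul hQ2K hZ2 hZpos.le hKpos.le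
      have hsum : E * (ψmt - ψpt) ≤ K*δ + K*M + K*M := by
        linarith only [hE2, t1, t2, t3, t4]
      have h9 : (-L * E) * (vB - vD) ≤ -(L*(M - δ)) := by
        have u1 := mul_le_mul_of_nonneg_left hzge hLpos.le
        linarith only [u1]
      have h10 : -(L*(M - δ)) + (K*δ + K*M + K*M) ≤ -(M/2) := by
        have hKM := mul_nonneg hKpos.le hMc.le
        simp only [hL] at hδK ⊢
        linarith only [hδK, hKM]
      exact le_trans (add_le_add h9 hsum) h10
    -- descent argument
    have descend : ∀ g : ℝ → ℝ, Continuous g → g 0 ≤ 0 →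
        (∀ s, 0 < s → s ≤ t → M - δ ≤ g s → ∃ gs, HasDerivAt g gs s ∧ gs ≤ -(M/2)) →
        ∀ s', s' ∈ Icc (0:ℝ) t → g s' ≤ M - δ/2 := by
      intro g hgc hg0 hgkey s' hs'
      by_contra hgt
      push_neg at hgt
      set Sc := Icc (0:ℝ) s' ∩ {r : ℝ | g r ≤ M - δ} with hSc
      have h0Sc : (0:ℝ) ∈ Sc := ⟨⟨le_refl 0, hs'.1⟩, by
        simp only [mem_setOf_eq]; linarith only [hg0, hδlt]⟩
      have hcpt : IsCompact Sc := isCompact_Icc.inter_right (isClosed_le hgc continuous_const)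
      set c := sSup Sc with hc
      have hmem : c ∈ Sc := hcpt.sSup_mem ⟨0, h0Sc⟩
      obtain ⟨⟨hc0, hcs'⟩, hcg⟩ := hmem
      simp only [mem_setOf_eq] at hcg
      have hne : c ≠ s' := by
        intro h; rw [h] at hcg; linarith only [hcg, hgt, hδpos]
      have hclt : c < s' := lt_of_le_of_ne hcs' hne
      have hgtc : ∀ r, c < r → r ≤ s' → M - δ ≤ g r := by
        intro r h1 h2
        by_contra h
        push_neg at h
        have hrSc : r ∈ Sc := ⟨⟨le_trans hc0 h1.le, h2⟩, h.le⟩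
        have h3 := le_csSup hcpt.bddAbove hrSc
        rw [← hc] at h3
        linarith only [h1, h3]
      have hanti : AntitoneOn (fun u => g u + (M/2)*u) (Icc c s') := by
        apply antitoneOn_of_deriv_nonpos (convex_Icc _ _)
        · exact (hgc.add (continuous_const.mul continuous_id)).continuousOn
        · intro u hu
          rw [interior_Icc] at hu
          obtain ⟨gs, hgs, -⟩ := hgkey u (lt_of_le_of_lt hc0 hu.1)
            (le_trans hu.2.le hs'.2) (hgtc u hu.1 hu.2.le)
          exact (hgs.add ((hasDerivAt_id u).const_mul (M/2))).differentiableAt.differentiableWithinAt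
        · intro u hu
          rw [interior_Icc] at hu
          obtain ⟨gs, hgs, hgsle⟩ := hgkey u (lt_of_le_of_lt hc0 hu.1)
            (le_trans hu.2.le hs'.2) (hgtc u hu.1 hu.2.le)
          have hd : HasDerivAt (fun u => g u + (M/2)*u) (gs + M/2) u := by
            have h2 := (hasDerivAt_id u).const_mul (M/2)
            exact (hgs.add h2).congr_deriv (by simp)
          rw [hd.deriv]
          linarith only [hgsle]
      have hfin := hanti (show c ∈ Icc c s' from ⟨le_refl c, hclt.le⟩)
        (show s' ∈ Icc c s' from ⟨hclt.le, le_refl s'⟩) hclt.le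
      simp only at hfin
      have hprod : 0 ≤ (M/2)*(s' - c) :=
        mul_nonneg (by linarith only [hMc]) (by linarith only [hclt])
      linarith only [hfin, hcg, hgt, hprod, hδpos]
    -- find a near-supremum point and contradict
    obtain ⟨m, hmSS, hmlt⟩ := exists_lt_of_lt_csSup hSSne
      (show M - δ/2 < M by linarith only [hδpos])
    rcases hmSS with rfl | ⟨⟨a, b⟩, hab, rfl⟩
    · linarith only [hmlt, hδlt, hδpos]
    · have hb : b ∈ Icc (0:ℝ) t := hab.2
      have hwcont : Continuous fun u => w a u := by
        simp only [hwdef]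
        exact (Real.continuous_exp.comp (continuous_const.mul continuous_id)).mul
          (((hmc1.comp (continuous_const.prodMk continuous_id))).sub
            ((hpc1.comp (continuous_const.prodMk continuous_id))))
      have hzcont : Continuous fun u => z a u := by
        simp only [hzdef]
        exact (Real.continuous_exp.comp (continuous_const.mul continuous_id)).mul
          (((hmc2.comp (continuous_const.prodMk continuous_id))).sub
            ((hpc2.comp (continuous_const.prodMk continuous_id))))
      have hw0 : w a 0 ≤ 0 := by
        simp only [hwdef, mul_zero, Real.exp_zero, one_mul]
        exact sub_nonpos.mpr (hinit a).1
      have hz0 : z a 0 ≤ 0 := by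
        simp only [hzdef, mul_zero, Real.exp_zero, one_mul]
        exact sub_nonpos.mpr (hinit a).2
      have hwd := descend (fun u => w a u) hwcont hw0 (key1 a) b hb
      have hzd := descend (fun u => z a u) hzcont hz0 (key2 a) b hb
      have hmax : max (w a b) (z a b) ≤ M - δ/2 := max_le hwd hzd
      linarith only [hmax, hmlt]
  -- conclude
  have h1 := (hwM x t ⟨ht, le_refl t⟩).1
  have h2 := (hwM x t ⟨ht, le_refl t⟩).2
  simp only [hwdef] at h1
  simp only [hzdef] at h2
  have hEp := Real.exp_pos (-L*t)
  constructor
  · nlinarith only [h1, hMle, hEp]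
  · nlinarith only [h2, hMle, hEp]
end

section
/- Assume: T > 0; r1, r2, a1, a2, b1, b2 : ℝ → ℝ are continuous, positive, T-periodic, and the bistability condition (A2) holds: ∫_0^T (a1(t)p(t) − b1(t)q(t)) dt < 0 and ∫_0^T (b2(t)q(t) − a2(t)p(t)) dt < 0. Then there exist a constant λ1 > 0 and continuously differentiable, positive, T-periodic functions p1⁺, p2⁺ : ℝ → ℝ such that for all t: (p1⁺)'(t) ≥ [λ1 − a1(t)p(t)] p1⁺(t) + b1(t)q(t) p2⁺(t) and (p2⁺)'(t) ≥ [λ1 + b2(t)q(t) − a2(t)p(t)] p2⁺(t). -/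
open MeasureTheory Set Filter

lemma ftc (f : ℝ → ℝ) (hf : Continuous f) (t : ℝ) :
    HasDerivAt (fun x => ∫ s in (0:ℝ)..x, f s) (f t) t :=
  intervalIntegral.integral_hasDerivAt_right (hf.intervalIntegrable _ _)
    (hf.stronglyMeasurableAtFilter _ _) hf.continuousAt

lemma cont_prim (f : ℝ → ℝ) (hf : Continuous f) :
    Continuous (fun x => ∫ s in (0:ℝ)..x, f s) :=
  continuous_iff_continuousAt.2 fun t => (ftc f hf t).continuousAt

lemma int_shift (f : ℝ → ℝ) (hf : Continuous f) (T t : ℝ) (hp : ∀ s, f (s + T) = f s) :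
    ∫ s in (0:ℝ)..(t + T), f s = (∫ s in (0:ℝ)..T, f s) + ∫ s in (0:ℝ)..t, f s := by
  have h1 : (∫ s in (0:ℝ)..T, f s) + ∫ s in T..(t + T), f s = ∫ s in (0:ℝ)..(t + T), f s :=
    intervalIntegral.integral_add_adjacent_intervals (hf.intervalIntegrable _ _)
      (hf.intervalIntegrable _ _)
  have h2 : ∫ s in T..(t + T), f s = ∫ s in (0:ℝ)..t, f s := by
    have h3 := intervalIntegral.integral_comp_add_right (a := (0:ℝ)) (b := t) f T
    simp only [hp, zero_add] at h3
    exact h3.symm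
  rw [← h1, h2]

lemma int_pos (f : ℝ → ℝ) (hf : Continuous f) (hpos : ∀ t, 0 < f t) (T : ℝ) (hT : 0 < T) :
    0 < ∫ s in (0:ℝ)..T, f s :=
  intervalIntegral.intervalIntegral_pos_of_pos_on (hf.intervalIntegrable _ _)
    (fun x _ => hpos x) hT

lemma int_nonneg (f : ℝ → ℝ) (hpos : ∀ t, 0 < f t) (t : ℝ) (ht : 0 ≤ t) :
    0 ≤ ∫ s in (0:ℝ)..t, f s :=
  intervalIntegral.integral_nonneg ht (fun x _ => (hpos x).le)

lemma pos_periodic_sign (T : ℝ) (hT : 0 < T) (f : ℝ → ℝ)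
    (hiff : ∀ t, 0 < f (t + T) → 0 < f t) (h : ∀ t, 0 ≤ t → 0 < f t) : ∀ t, 0 < f t := by
  have key : ∀ n : ℕ, ∀ t : ℝ, 0 ≤ t + n * T → 0 < f t := by
    intro n
    induction n with
    | zero => intro t ht; exact h t (by simpa using ht)
    | succ n ih =>
      intro t ht
      exact hiff t (ih (t + T) (by push_cast at ht ⊢; linarith))
  intro t
  obtain ⟨n, hn⟩ := exists_nat_ge (-t / T)
  exact key n t (by rw [div_le_iff₀ hT] at hn; linarith)

lemma int_transl (f : ℝ → ℝ) (T t : ℝ) :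
    ∫ s in T..(t + T), f s = ∫ s in (0:ℝ)..t, f (s + T) := by
  have h3 := intervalIntegral.integral_comp_add_right (a := (0:ℝ)) (b := t) f T
  simp only [zero_add] at h3
  exact h3.symm

lemma pfun_props (T : ℝ) (hT : 0 < T) (r a : ℝ → ℝ)
    (hr : Continuous r) (hrpos : ∀ t, 0 < r t) (hrper : ∀ t, r (t + T) = r t)
    (ha : Continuous a) (hapos : ∀ t, 0 < a t) (haper : ∀ t, a (t + T) = a t) :
    Continuous (pfun r a T) ∧ (∀ t, 0 < pfun r a T t) ∧
      (∀ t, pfun r a T (t + T) = pfun r a T t) := by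
  set R : ℝ → ℝ := fun t => ∫ s in (0:ℝ)..t, r s with hR
  set g : ℝ → ℝ := fun s => Real.exp (R s) * a s with hg
  have hRc : Continuous R := cont_prim r hr
  have hgc : Continuous g := (Real.continuous_exp.comp hRc).mul ha
  have hgpos : ∀ s, 0 < g s := fun s => mul_pos (Real.exp_pos _) (hapos s)
  set A : ℝ → ℝ := fun t => ∫ s in (0:ℝ)..t, g s with hA
  have hAc : Continuous A := cont_prim g hgc
  have hRT : 0 < R T := int_pos r hr hrpos T hT
  have hAT : 0 < A T := int_pos g hgc hgpos T hT
  have hp0 : p0c r a T = (Real.exp (R T) - 1) / A T := rfl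
  have hexpRT : 1 < Real.exp (R T) := Real.one_lt_exp_iff.mpr hRT
  have hp0pos : 0 < p0c r a T := by
    rw [hp0]; exact div_pos (by linarith) hAT
  have hp0AT : p0c r a T * A T = Real.exp (R T) - 1 := by
    rw [hp0]; field_simp
  have hRshift : ∀ t, R (t + T) = R T + R t := fun t => int_shift r hr T t hrper
  have hgper : ∀ s, g (s + T) = Real.exp (R T) * g s := by
    intro s
    simp only [hg, hRshift s, haper s, Real.exp_add]
    ring
  have hAshift : ∀ t, A (t + T) = A T + Real.exp (R T) * A t := by
    intro t
    have h1 : A T + ∫ s in T..(t + T), g s = A (t + T) :=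
      intervalIntegral.integral_add_adjacent_intervals (hgc.intervalIntegrable _ _)
        (hgc.intervalIntegrable _ _)
    rw [← h1, int_transl g T t]
    simp only [hgper]
    rw [intervalIntegral.integral_const_mul]
  set D : ℝ → ℝ := fun t => 1 + p0c r a T * A t with hD
  have hDc : Continuous D := continuous_const.add (continuous_const.mul hAc)
  have hDshift : ∀ t, D (t + T) = Real.exp (R T) * D t := by
    intro t
    simp only [hD, hAshift t]
    have : p0c r a T * A T = Real.exp (R T) - 1 := hp0AT
    ring_nf
    nlinarith [this]
  have hDpos : ∀ t, 0 < D t := by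
    apply pos_periodic_sign T hT D
    · intro t h
      have := hDshift t
      nlinarith [Real.exp_pos (R T)]
    · intro t ht
      have : 0 ≤ A t := int_nonneg g hgpos t ht
      simp only [hD]
      nlinarith [hp0pos]
  have hpf : ∀ t, pfun r a T t = p0c r a T * Real.exp (R t) / D t := fun t => rfl
  refine ⟨?_, fun t => ?_, fun t => ?_⟩
  · have : pfun r a T = fun t => p0c r a T * Real.exp (R t) / D t := funext hpf
    rw [this]
    exact ((continuous_const.mul (Real.continuous_exp.comp hRc)).div hDc
      fun t => (hDpos t).ne')
  · rw [hpf]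
    exact div_pos (mul_pos hp0pos (Real.exp_pos _)) (hDpos t)
  · rw [hpf, hpf, hRshift, hDshift, Real.exp_add]
    rw [mul_comm (Real.exp (R T)) (Real.exp (R t))]
    rw [show p0c r a T * (Real.exp (R t) * Real.exp (R T)) =
      (p0c r a T * Real.exp (R t)) * Real.exp (R T) by ring]
    rw [mul_comm (Real.exp (R T)) (D t)]
    exact mul_div_mul_right _ _ (Real.exp_ne_zero _)

theorem stmt8 (T : ℝ) (hT : 0 < T) (r1 r2 a1 a2 b1 b2 : ℝ → ℝ)
    (hr1 : Continuous r1 ∧ (∀ t, 0 < r1 t) ∧ ∀ t, r1 (t + T) = r1 t)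
    (hr2 : Continuous r2 ∧ (∀ t, 0 < r2 t) ∧ ∀ t, r2 (t + T) = r2 t)
    (ha1 : Continuous a1 ∧ (∀ t, 0 < a1 t) ∧ ∀ t, a1 (t + T) = a1 t)
    (ha2 : Continuous a2 ∧ (∀ t, 0 < a2 t) ∧ ∀ t, a2 (t + T) = a2 t)
    (hb1 : Continuous b1 ∧ (∀ t, 0 < b1 t) ∧ ∀ t, b1 (t + T) = b1 t)
    (hb2 : Continuous b2 ∧ (∀ t, 0 < b2 t) ∧ ∀ t, b2 (t + T) = b2 t)
    (hA2 : (∫ t in (0:ℝ)..T, (a1 t * pfun r1 a1 T t - b1 t * pfun r2 b2 T t)) < 0 ∧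
      (∫ t in (0:ℝ)..T, (b2 t * pfun r2 b2 T t - a2 t * pfun r1 a1 T t)) < 0)
    :
    ∃ lam1 : ℝ, 0 < lam1 ∧ ∃ p1 p2 p1' p2' : ℝ → ℝ,
      Continuous p1' ∧ Continuous p2' ∧
      (∀ t, HasDerivAt p1 (p1' t) t) ∧ (∀ t, HasDerivAt p2 (p2' t) t) ∧
      (∀ t, 0 < p1 t) ∧ (∀ t, 0 < p2 t) ∧
      (∀ t, p1 (t + T) = p1 t) ∧ (∀ t, p2 (t + T) = p2 t) ∧
      (∀ t, (lam1 - a1 t * pfun r1 a1 T t) * p1 t + b1 t * pfun r2 b2 T t * p2 t ≤ p1' t) ∧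
      (∀ t, (lam1 + b2 t * pfun r2 b2 T t - a2 t * pfun r1 a1 T t) * p2 t ≤ p2' t) := by
  obtain ⟨hr1c, hr1p, hr1T⟩ := hr1
  obtain ⟨hr2c, hr2p, hr2T⟩ := hr2
  obtain ⟨ha1c, ha1p, ha1T⟩ := ha1
  obtain ⟨ha2c, ha2p, ha2T⟩ := ha2
  obtain ⟨hb1c, hb1p, hb1T⟩ := hb1
  obtain ⟨hb2c, hb2p, hb2T⟩ := hb2
  obtain ⟨hpc, hpp, hpT⟩ := pfun_props T hT r1 a1 hr1c hr1p hr1T ha1c ha1p ha1T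
  obtain ⟨hqc, hqp, hqT⟩ := pfun_props T hT r2 b2 hr2c hr2p hr2T hb2c hb2p hb2T
  set p : ℝ → ℝ := pfun r1 a1 T
  set q : ℝ → ℝ := pfun r2 b2 T
  set φ : ℝ → ℝ := fun t => a2 t * p t - b2 t * q t with hφ
  have hφc : Continuous φ := (ha2c.mul hpc).sub (hb2c.mul hqc)
  have hφT : ∀ t, φ (t + T) = φ t := by
    intro t; simp only [hφ, ha2T, hb2T, hpT, hqT]
  have hIφ : 0 < ∫ t in (0:ℝ)..T, φ t := by
    have h2 := hA2.2
    have : (∫ t in (0:ℝ)..T, (b2 t * q t - a2 t * p t)) = - ∫ t in (0:ℝ)..T, φ t := by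
      rw [← intervalIntegral.integral_neg]
      congr 1; funext t; simp only [hφ]; ring
    rw [this] at h2; linarith
  set ψ : ℝ → ℝ := fun t => a1 t * p t with hψ
  have hψc : Continuous ψ := ha1c.mul hpc
  have hψpos : ∀ t, 0 < ψ t := fun t => mul_pos (ha1p t) (hpp t)
  have hψT : ∀ t, ψ (t + T) = ψ t := by
    intro t; simp only [hψ, ha1T, hpT]
  have hIψ : 0 < ∫ t in (0:ℝ)..T, ψ t := int_pos ψ hψc hψpos T hT
  set lamb : ℝ := (∫ t in (0:ℝ)..T, φ t) / T with hlamb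
  set psib : ℝ := (∫ t in (0:ℝ)..T, ψ t) / T with hpsib
  have hlambpos : 0 < lamb := div_pos hIφ hT
  have hpsibpos : 0 < psib := div_pos hIψ hT
  set lam1 : ℝ := min lamb psib / 2 with hlam1
  have hlam1pos : 0 < lam1 := by
    apply div_pos _ two_pos
    exact lt_min hlambpos hpsibpos
  have hlam1le : lam1 ≤ lamb := by
    have := min_le_left lamb psib; rw [hlam1]; linarith
  have hlam1lt : lam1 < psib := by
    have := min_le_right lamb psib; rw [hlam1]; linarith
  -- p2
  set F : ℝ → ℝ := fun t => ∫ s in (0:ℝ)..t, (lamb - φ s) with hF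
  have hφ'c : Continuous (fun s => lamb - φ s) := continuous_const.sub hφc
  have hFc : Continuous F := cont_prim _ hφ'c
  have hFd : ∀ t, HasDerivAt F (lamb - φ t) t := ftc _ hφ'c
  have hFT : F T = 0 := by
    have heq : F T = T * lamb - ∫ t in (0:ℝ)..T, φ t := by
      simp only [hF]
      rw [intervalIntegral.integral_sub intervalIntegrable_const (hφc.intervalIntegrable _ _),
        intervalIntegral.integral_const, smul_eq_mul, sub_zero]
    rw [heq, hlamb]
    field_simp
    ring
  have hFshift : ∀ t, F (t + T) = F t := by
    intro t
    have h1 := int_shift _ hφ'c T t (fun s => by rw [hφT s])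
    have h0 : (∫ s in (0:ℝ)..T, (lamb - φ s)) = 0 := hFT
    show (∫ s in (0:ℝ)..(t + T), (lamb - φ s)) = ∫ s in (0:ℝ)..t, (lamb - φ s)
    rw [h1, h0, zero_add]
  set p2 : ℝ → ℝ := fun t => Real.exp (F t) with hp2
  have hp2c : Continuous p2 := Real.continuous_exp.comp hFc
  have hp2pos : ∀ t, 0 < p2 t := fun t => Real.exp_pos _
  have hp2T : ∀ t, p2 (t + T) = p2 t := fun t => by simp only [hp2, hFshift]
  set p2' : ℝ → ℝ := fun t => (lamb - φ t) * p2 t with hp2'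
  have hp2'c : Continuous p2' := hφ'c.mul hp2c
  have hp2d : ∀ t, HasDerivAt p2 (p2' t) t := by
    intro t
    have := (hFd t).exp
    simpa [hp2, hp2', mul_comm] using this
  -- p1
  set G : ℝ → ℝ := fun t => ∫ s in (0:ℝ)..t, (lam1 - ψ s) with hG
  have hψ'c : Continuous (fun s => lam1 - ψ s) := continuous_const.sub hψc
  have hGc : Continuous G := cont_prim _ hψ'c
  have hGd : ∀ t, HasDerivAt G (lam1 - ψ t) t := ftc _ hψ'c
  have hGT : G T < 0 := by
    have heq : G T = T * lam1 - ∫ t in (0:ℝ)..T, ψ t := by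
      simp only [hG]
      rw [intervalIntegral.integral_sub intervalIntegrable_const (hψc.intervalIntegrable _ _),
        intervalIntegral.integral_const, smul_eq_mul, sub_zero]
    have h2 : lam1 * T < ∫ t in (0:ℝ)..T, ψ t := by
      have h3 : lam1 < (∫ t in (0:ℝ)..T, ψ t) / T := by rw [← hpsib]; exact hlam1lt
      exact (lt_div_iff₀ hT).mp h3
    rw [heq]; linarith [h2]
  have hGshift : ∀ t, G (t + T) = G T + G t := by
    intro t
    have h1 := int_shift _ hψ'c T t (fun s => by rw [hψT s])
    show (∫ s in (0:ℝ)..(t + T), (lam1 - ψ s)) =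
      (∫ s in (0:ℝ)..T, (lam1 - ψ s)) + ∫ s in (0:ℝ)..t, (lam1 - ψ s)
    exact h1
  set m : ℝ := Real.exp (G T) with hm
  have hmpos : 0 < m := Real.exp_pos _
  have hmlt : m < 1 := Real.exp_lt_one_iff.mpr hGT
  set h : ℝ → ℝ := fun t => b1 t * q t * p2 t with hh
  have hhc : Continuous h := (hb1c.mul hqc).mul hp2c
  have hhpos : ∀ t, 0 < h t := fun t => mul_pos (mul_pos (hb1p t) (hqp t)) (hp2pos t)
  have hhT : ∀ t, h (t + T) = h t := by
    intro t; simp only [hh, hb1T, hqT, hp2T]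
  set k : ℝ → ℝ := fun s => Real.exp (-G s) * h s with hk
  have hkc : Continuous k := (Real.continuous_exp.comp hGc.neg).mul hhc
  have hkpos : ∀ s, 0 < k s := fun s => mul_pos (Real.exp_pos _) (hhpos s)
  set H : ℝ → ℝ := fun t => ∫ s in (0:ℝ)..t, k s with hH
  have hHc : Continuous H := cont_prim _ hkc
  have hHd : ∀ t, HasDerivAt H (k t) t := ftc _ hkc
  have hI : 0 < H T := int_pos k hkc hkpos T hT
  set c : ℝ := m * H T / (1 - m) with hc
  have hcpos : 0 < c := div_pos (mul_pos hmpos hI) (by linarith)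
  clear_value c
  have hkshift : ∀ s, k (s + T) = m⁻¹ * k s := by
    intro s
    simp only [hk, hhT, hGshift, neg_add, Real.exp_add, hm, Real.exp_neg]
    ring
  have hHshift : ∀ t, H (t + T) = H T + m⁻¹ * H t := by
    intro t
    have h1 : H T + ∫ s in T..(t + T), k s = H (t + T) :=
      intervalIntegral.integral_add_adjacent_intervals (hkc.intervalIntegrable _ _)
        (hkc.intervalIntegrable _ _)
    rw [← h1, int_transl k T t]
    simp only [hkshift]
    rw [intervalIntegral.integral_const_mul]
  set p1 : ℝ → ℝ := fun t => Real.exp (G t) * (c + H t) with hp1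
  have hp1c : Continuous p1 := (Real.continuous_exp.comp hGc).mul (continuous_const.add hHc)
  set p1' : ℝ → ℝ := fun t => (lam1 - ψ t) * p1 t + h t with hp1'
  have hp1'c : Continuous p1' := (hψ'c.mul hp1c).add hhc
  have hp1d : ∀ t, HasDerivAt p1 (p1' t) t := by
    intro t
    have hd := ((hGd t).exp.mul ((hasDerivAt_const t c).add (hHd t)))
    convert hd using 1
    · rfl
    · rfl
    · rfl
    simp only [hp1', hp1, hk, zero_add, Pi.add_apply]
    rw [Real.exp_neg]
    field_simp
  have hp1T : ∀ t, p1 (t + T) = p1 t := by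
    intro t
    have hmne : m ≠ 0 := ne_of_gt hmpos
    have h1mne : (1:ℝ) - m ≠ 0 := by intro hcon; rw [sub_eq_zero] at hcon; linarith
    have hc1 : c * (1 - m) = m * H T := by
      rw [hc]; exact div_mul_cancel₀ _ h1mne
    have hmc : m * (c + H T) = c := by linear_combination -hc1
    have h2 : m * m⁻¹ = 1 := mul_inv_cancel₀ hmne
    have key : m * (c + (H T + m⁻¹ * H t)) = c + H t := by
      linear_combination hmc + H t * h2
    simp only [hp1, hGshift, hHshift, Real.exp_add, ← hm]
    rw [mul_comm m (Real.exp (G t)), mul_assoc, key]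
  have hp1pos : ∀ t, 0 < p1 t := by
    apply pos_periodic_sign T hT p1
    · intro t hpos; rwa [hp1T t] at hpos
    · intro t ht
      have : 0 ≤ H t := int_nonneg k hkpos t ht
      exact mul_pos (Real.exp_pos _) (by linarith)
  refine ⟨lam1, hlam1pos, p1, p2, p1', p2', hp1'c, hp2'c, hp1d, hp2d, hp1pos, hp2pos,
    hp1T, hp2T, fun t => ?_, fun t => ?_⟩
  · exact le_of_eq (by simp only [hp1', hψ, hh])
  · have : lam1 + b2 t * q t - a2 t * p t = lam1 - φ t := by simp only [hφ]; ring
    rw [this, hp2']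
    have : lam1 - φ t ≤ lamb - φ t := by linarith
    exact mul_le_mul_of_nonneg_right this (hp2pos t).le
end

section
/- Assume: T > 0; d1, r1, r2, a1, a2, b1, b2 : ℝ → ℝ are continuous, positive, T-periodic; the kernel J1 is nonnegative, Lebesgue measurable, even (J1(x) = J1(−x)), satisfies ∫_ℝ J1(x) dx = 1 and ∫_ℝ J1(x)e^{−λx} dx < ∞ for every λ ∈ ℝ; and the bistability condition (A2) holds: ∫_0^T (a1(t)p(t) − b1(t)q(t)) dt < 0 and ∫_0^T (b2(t)q(t) − a2(t)p(t)) dt < 0. Define I1(μ, c) = ∫_0^T [d1(t)(∫_ℝ J1(y)e^{−μy} dy − 1) − cμ + a1(t)p(t) − b1(t)q(t)] dt. Then for every c ∈ ℝ: the function μ ↦ I1(μ, c) is convex on [0, ∞), I1(0, c) < 0, and there exists exactly one μ > 0 with I1(μ, c) = 0. -/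
open MeasureTheory Set Filter

lemma cosh_bound (x : ℝ) : 2 + x ^ 2 / 2 ≤ Real.exp x + Real.exp (-x) := by
  rcases le_total 0 x with hx | hx
  · have h1 := Real.quadratic_le_exp_of_nonneg hx
    have h2 := Real.add_one_le_exp (-x)
    nlinarith
  · have h1 := Real.quadratic_le_exp_of_nonneg (neg_nonneg.2 hx)
    have h2 := Real.add_one_le_exp x
    nlinarith

lemma M_convex (J1 : ℝ → ℝ) (hJnn : ∀ x, 0 ≤ J1 x)
    (hJexp : ∀ l : ℝ, Integrable fun x => J1 x * Real.exp (-l * x)) :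
    ConvexOn ℝ Set.univ (fun μ : ℝ => ∫ y, J1 y * Real.exp (-μ * y)) := by
  refine ⟨convex_univ, fun x _ y _ a b ha hb hab => ?_⟩
  simp only [smul_eq_mul]
  have key : ∀ z : ℝ, J1 z * Real.exp (-(a * x + b * y) * z) ≤
      a * (J1 z * Real.exp (-x * z)) + b * (J1 z * Real.exp (-y * z)) := by
    intro z
    have hexp : Real.exp (a * (-x * z) + b * (-y * z)) ≤
        a * Real.exp (-x * z) + b * Real.exp (-y * z) := by
      have := convexOn_exp.2 (Set.mem_univ (-x * z)) (Set.mem_univ (-y * z)) ha hb hab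
      simpa [smul_eq_mul] using this
    have harg : -(a * x + b * y) * z = a * (-x * z) + b * (-y * z) := by ring
    rw [harg]
    nlinarith [mul_le_mul_of_nonneg_left hexp (hJnn z)]
  calc (∫ z, J1 z * Real.exp (-(a * x + b * y) * z))
      ≤ ∫ z, (a * (J1 z * Real.exp (-x * z)) + b * (J1 z * Real.exp (-y * z))) := by
        refine integral_mono (hJexp _) ?_ key
        exact ((hJexp x).const_mul a).add ((hJexp y).const_mul b)
    _ = a * (∫ z, J1 z * Real.exp (-x * z)) + b * ∫ z, J1 z * Real.exp (-y * z) := by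
        rw [integral_add ((hJexp x).const_mul a) ((hJexp y).const_mul b),
          integral_const_mul, integral_const_mul]

lemma M_cont (J1 : ℝ → ℝ) (hJnn : ∀ x, 0 ≤ J1 x)
    (hJexp : ∀ l : ℝ, Integrable fun x => J1 x * Real.exp (-l * x)) :
    Continuous (fun μ : ℝ => ∫ y, J1 y * Real.exp (-μ * y)) :=
  continuousOn_univ.1 ((M_convex J1 hJnn hJexp).continuousOn isOpen_univ)

lemma M_zero (J1 : ℝ → ℝ) (hJ1int : (∫ x, J1 x) = 1) :
    (∫ y, J1 y * Real.exp (-(0:ℝ) * y)) = 1 := by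
  simpa using hJ1int

lemma sigma_int (J1 : ℝ → ℝ) (hJm : Measurable J1) (hJnn : ∀ x, 0 ≤ J1 x)
    (hJexp : ∀ l : ℝ, Integrable fun x => J1 x * Real.exp (-l * x)) :
    Integrable (fun y => J1 y * y ^ 2) := by
  have hmaj : Integrable (fun y : ℝ =>
      2 * (J1 y * Real.exp (-(-1 : ℝ) * y) + J1 y * Real.exp (-(1 : ℝ) * y))) :=
    ((hJexp (-1)).add (hJexp 1)).const_mul 2
  refine hmaj.mono' ((hJm.mul (measurable_id.pow_const 2)).aestronglyMeasurable) ?_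
  filter_upwards with y
  have h1 := cosh_bound y
  have h2 := hJnn y
  have h3 := (Real.exp_pos y).le
  have h4 := (Real.exp_pos (-y)).le
  rw [Real.norm_eq_abs, abs_of_nonneg (by positivity)]
  have he : -(-1 : ℝ) * y = y := by ring
  have he' : -(1 : ℝ) * y = -y := by ring
  rw [he, he']
  nlinarith [mul_le_mul_of_nonneg_left h1 h2]

lemma J_int (J1 : ℝ → ℝ)
    (hJexp : ∀ l : ℝ, Integrable fun x => J1 x * Real.exp (-l * x)) :
    Integrable J1 := by
  have := hJexp 0
  simpa using this

lemma sigma_pos (J1 : ℝ → ℝ) (hJm : Measurable J1) (hJnn : ∀ x, 0 ≤ J1 x)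
    (hJ1int : (∫ x, J1 x) = 1)
    (hJexp : ∀ l : ℝ, Integrable fun x => J1 x * Real.exp (-l * x)) :
    0 < ∫ y, J1 y * y ^ 2 := by
  rcases lt_or_ge 0 (∫ y, J1 y * y ^ 2) with h | h
  · exact h
  exfalso
  have hnn : ∀ y, 0 ≤ J1 y * y ^ 2 := fun y => mul_nonneg (hJnn y) (sq_nonneg y)
  have hint := sigma_int J1 hJm hJnn hJexp
  have h0 : (∫ y, J1 y * y ^ 2) = 0 :=
    le_antisymm h (integral_nonneg hnn)
  have hae : (fun y => J1 y * y ^ 2) =ᵐ[volume] 0 :=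
    (integral_eq_zero_iff_of_nonneg hnn hint).1 h0
  have hne : ∀ᵐ y : ℝ, y ≠ 0 := by
    rw [ae_iff]
    simp only [ne_eq, not_not, Set.setOf_eq_eq_singleton]
    exact measure_singleton 0
  have hJ0 : J1 =ᵐ[volume] 0 := by
    filter_upwards [hae, hne] with y hy hy0
    have hy2 : y ^ 2 ≠ 0 := pow_ne_zero 2 hy0
    have : J1 y * y ^ 2 = 0 := hy
    exact (mul_eq_zero.1 this).resolve_right hy2
  have : (∫ x, J1 x) = 0 := by
    rw [integral_congr_ae hJ0]; simp
  rw [hJ1int] at this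
  norm_num at this

lemma M_symm (J1 : ℝ → ℝ) (hJeven : ∀ x, J1 x = J1 (-x)) (μ : ℝ) :
    (∫ y, J1 y * Real.exp (μ * y)) = ∫ y, J1 y * Real.exp (-μ * y) := by
  calc (∫ y, J1 y * Real.exp (μ * y))
      = ∫ y, J1 (-y) * Real.exp (-μ * (-y)) := by
        congr 1; funext z; rw [← hJeven z, neg_mul_neg]
    _ = ∫ y, J1 y * Real.exp (-μ * y) :=
        integral_neg_eq_self (fun y => J1 y * Real.exp (-μ * y)) volume

lemma M_ge (J1 : ℝ → ℝ) (hJm : Measurable J1) (hJnn : ∀ x, 0 ≤ J1 x)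
    (hJ1int : (∫ x, J1 x) = 1) (hJeven : ∀ x, J1 x = J1 (-x))
    (hJexp : ∀ l : ℝ, Integrable fun x => J1 x * Real.exp (-l * x)) (μ : ℝ) :
    1 + μ ^ 2 * (∫ y, J1 y * y ^ 2) / 4 ≤ ∫ y, J1 y * Real.exp (-μ * y) := by
  have hIpos : Integrable (fun y => J1 y * Real.exp (μ * y)) := by
    have := hJexp (-μ); simpa using this
  have hσint := sigma_int J1 hJm hJnn hJexp
  have hJint := J_int J1 hJexp
  have hsum : (∫ y, (J1 y * Real.exp (-μ * y) + J1 y * Real.exp (μ * y)))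
      = (∫ y, J1 y * Real.exp (-μ * y)) + ∫ y, J1 y * Real.exp (μ * y) :=
    integral_add (hJexp μ) hIpos
  have hmono : (∫ y, (2 * J1 y + μ ^ 2 / 2 * (J1 y * y ^ 2)))
      ≤ ∫ y, (J1 y * Real.exp (-μ * y) + J1 y * Real.exp (μ * y)) := by
    refine integral_mono ((hJint.const_mul 2).add (hσint.const_mul (μ ^ 2 / 2)))
      ((hJexp μ).add hIpos) (fun y => ?_)
    have h1 := cosh_bound (μ * y)
    rw [← neg_mul] at h1
    have h2 := hJnn y
    nlinarith [mul_le_mul_of_nonneg_left h1 h2]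
  have hlhs : (∫ y, (2 * J1 y + μ ^ 2 / 2 * (J1 y * y ^ 2)))
      = 2 + μ ^ 2 / 2 * ∫ y, J1 y * y ^ 2 := by
    rw [integral_add (hJint.const_mul 2) (hσint.const_mul (μ ^ 2 / 2)),
      integral_const_mul, integral_const_mul, hJ1int]
    ring
  have hsymm := M_symm J1 hJeven μ
  rw [hlhs, hsum, hsymm] at hmono
  linarith

lemma pfun_contOn (r a : ℝ → ℝ) (T : ℝ) (hT : 0 < T)
    (hr : Continuous r) (hrpos : ∀ t, 0 < r t)
    (ha : Continuous a) (hapos : ∀ t, 0 < a t) :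
    ContinuousOn (pfun r a T) (Set.Icc 0 T) := by
  have hR : Continuous fun t => ∫ s in (0:ℝ)..t, r s :=
    intervalIntegral.continuous_primitive (fun x y => hr.intervalIntegrable x y) 0
  have hInt : Continuous fun s => Real.exp (∫ τ in (0:ℝ)..s, r τ) * a s :=
    (Real.continuous_exp.comp hR).mul ha
  have hA : Continuous fun t => ∫ s in (0:ℝ)..t, Real.exp (∫ τ in (0:ℝ)..s, r τ) * a s :=
    intervalIntegral.continuous_primitive (fun x y => hInt.intervalIntegrable x y) 0
  have hp0 : 0 < p0c r a T := by
    unfold p0c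
    apply div_pos
    · have : 0 < ∫ s in (0:ℝ)..T, r s :=
        intervalIntegral.intervalIntegral_pos_of_pos (hr.intervalIntegrable 0 T) hrpos hT
      have := Real.one_lt_exp_iff.2 this
      linarith
    · exact intervalIntegral.intervalIntegral_pos_of_pos (hInt.intervalIntegrable 0 T)
        (fun x => mul_pos (Real.exp_pos _) (hapos x)) hT
  unfold pfun
  apply ContinuousOn.div
  · exact (continuous_const.mul (Real.continuous_exp.comp hR)).continuousOn
  · exact (continuous_const.add (continuous_const.mul hA)).continuousOn
  · intro t ht
    have hAnn : 0 ≤ ∫ s in (0:ℝ)..t, Real.exp (∫ τ in (0:ℝ)..s, r τ) * a s :=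
      intervalIntegral.integral_nonneg ht.1
        (fun s _ => (mul_pos (Real.exp_pos _) (hapos s)).le)
    positivity

lemma convex_root (f : ℝ → ℝ) (hconv : ConvexOn ℝ (Set.Ici 0) f)
    (hcont : Continuous f) (hf0 : f 0 < 0) (X : ℝ) (hX0 : 0 ≤ X) (hX : 0 < f X) :
    ∃! μ : ℝ, 0 < μ ∧ f μ = 0 := by
  have hmem : (0 : ℝ) ∈ Set.Ioo (f 0) (f X) := ⟨hf0, hX⟩
  obtain ⟨μ, hμmem, hμeq⟩ := intermediate_value_Ioo hX0 hcont.continuousOn hmem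
  have key : ∀ s t : ℝ, 0 < s → s < t → f t = 0 → f s < 0 := by
    intro s t hs hst hft
    have ht0 : 0 < t := hs.trans hst
    have hb1 : s / t < 1 := (div_lt_one ht0).2 hst
    have hb0 : 0 ≤ s / t := (div_pos hs ht0).le
    have hcomb := hconv.2 (Set.self_mem_Ici (a := (0:ℝ)))
      (show t ∈ Set.Ici (0:ℝ) from ht0.le) (by linarith : (0:ℝ) ≤ 1 - s / t) hb0
      (by ring)
    have hpt : (1 - s / t) • (0:ℝ) + (s / t) • t = s := by
      simp only [smul_eq_mul]
      field_simp
      ring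
    rw [hpt] at hcomb
    have : f s ≤ (1 - s / t) * f 0 + (s / t) * f t := by simpa [smul_eq_mul] using hcomb
    rw [hft] at this
    nlinarith
  refine ⟨μ, ⟨hμmem.1, hμeq⟩, fun ν hν => ?_⟩
  obtain ⟨hνpos, hνeq⟩ := hν
  by_contra hne
  rcases lt_or_gt_of_ne hne with h | h
  · exact absurd hνeq (key ν μ hνpos h hμeq).ne
  · exact absurd hμeq (key μ ν hμmem.1 h hνeq).ne

lemma closed_form (c D K σ T : ℝ) (hD : 0 < D) (hK : K < 0) (hσ : 0 < σ) (hT : 0 < T)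
    (M : ℝ → ℝ) (hMconv : ConvexOn ℝ Set.univ M) (hMcont : Continuous M)
    (hM0 : M 0 = 1) (hMge : ∀ μ, 1 + μ ^ 2 * σ / 4 ≤ M μ) :
    ConvexOn ℝ (Set.Ici 0) (fun μ : ℝ => D * (M μ - 1) - c * μ * T + K) ∧
    (D * (M 0 - 1) - c * 0 * T + K) < 0 ∧
    ∃! μ : ℝ, 0 < μ ∧ D * (M μ - 1) - c * μ * T + K = 0 := by
  have hconv : ConvexOn ℝ (Set.Ici 0) (fun μ : ℝ => D * (M μ - 1) - c * μ * T + K) := by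
    refine ⟨convex_Ici 0, fun x _ y _ a b ha hb hab => ?_⟩
    simp only [smul_eq_mul]
    have hb' : b = 1 - a := by linarith
    subst hb'
    have hM := hMconv.2 (Set.mem_univ x) (Set.mem_univ y) ha hb hab
    simp only [smul_eq_mul] at hM
    nlinarith [mul_le_mul_of_nonneg_left hM hD.le]
  have hf0 : D * (M 0 - 1) - c * 0 * T + K < 0 := by
    rw [hM0]; norm_num; linarith
  refine ⟨hconv, hf0, ?_⟩
  have hcont : Continuous (fun μ : ℝ => D * (M μ - 1) - c * μ * T + K) :=
    (((continuous_const.mul (hMcont.sub continuous_const)).sub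
      ((continuous_const.mul continuous_id).mul continuous_const)).add continuous_const)
  set ε : ℝ := D * σ / 4 with hεdef
  have hε : 0 < ε := by positivity
  set X : ℝ := (|c| * T + |K| + 1) / ε + 1 with hXdef
  have hX1 : (1:ℝ) ≤ X := by
    have : 0 ≤ (|c| * T + |K| + 1) / ε := by positivity
    simp only [hXdef]; linarith
  have hX0 : (0:ℝ) ≤ X := by linarith
  have hεX : ε * X = |c| * T + |K| + 1 + ε := by
    rw [hXdef]
    field_simp
  have h1 : ε * X * X = (|c| * T + |K| + 1 + ε) * X := by rw [hεX]
  have h4 : ε * X * X ≤ D * (M X - 1) := by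
    have := mul_le_mul_of_nonneg_left (hMge X) hD.le
    simp only [hεdef]
    nlinarith [this]
  have hfX : 0 < D * (M X - 1) - c * X * T + K := by
    nlinarith [h1, h4, hX1, le_abs_self c, neg_abs_le K, abs_nonneg c, abs_nonneg K, hT, hε,
      mul_le_mul_of_nonneg_right (le_abs_self c) (mul_nonneg hX0 hT.le)]
  exact convex_root _ hconv hcont hf0 X hX0 hfX

theorem stmt15 (T : ℝ) (hT : 0 < T) (d1 r1 r2 a1 a2 b1 b2 J1 : ℝ → ℝ)
    (hd1 : Continuous d1 ∧ (∀ t, 0 < d1 t) ∧ ∀ t, d1 (t + T) = d1 t)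
    (hr1 : Continuous r1 ∧ (∀ t, 0 < r1 t) ∧ ∀ t, r1 (t + T) = r1 t)
    (hr2 : Continuous r2 ∧ (∀ t, 0 < r2 t) ∧ ∀ t, r2 (t + T) = r2 t)
    (ha1 : Continuous a1 ∧ (∀ t, 0 < a1 t) ∧ ∀ t, a1 (t + T) = a1 t)
    (ha2 : Continuous a2 ∧ (∀ t, 0 < a2 t) ∧ ∀ t, a2 (t + T) = a2 t)
    (hb1 : Continuous b1 ∧ (∀ t, 0 < b1 t) ∧ ∀ t, b1 (t + T) = b1 t)
    (hb2 : Continuous b2 ∧ (∀ t, 0 < b2 t) ∧ ∀ t, b2 (t + T) = b2 t)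
    (hJ1 : Measurable J1 ∧ (∀ x, 0 ≤ J1 x) ∧ (∫ x, J1 x) = 1 ∧
      ∀ l : ℝ, Integrable fun x => J1 x * Real.exp (-l * x))
    (hJ1even : ∀ x, J1 x = J1 (-x))
    (hA2 : (∫ t in (0:ℝ)..T, (a1 t * pfun r1 a1 T t - b1 t * pfun r2 b2 T t)) < 0 ∧
      (∫ t in (0:ℝ)..T, (b2 t * pfun r2 b2 T t - a2 t * pfun r1 a1 T t)) < 0)
    :
    ∀ c : ℝ,
      ConvexOn ℝ (Set.Ici 0) (fun μ : ℝ => ∫ t in (0:ℝ)..T,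
        (d1 t * ((∫ y, J1 y * Real.exp (-μ * y)) - 1) - c * μ +
          a1 t * pfun r1 a1 T t - b1 t * pfun r2 b2 T t)) ∧
      (∫ t in (0:ℝ)..T,
        (d1 t * ((∫ y, J1 y * Real.exp (-(0:ℝ) * y)) - 1) - c * 0 +
          a1 t * pfun r1 a1 T t - b1 t * pfun r2 b2 T t)) < 0 ∧
      ∃! μ : ℝ, 0 < μ ∧ (∫ t in (0:ℝ)..T,
        (d1 t * ((∫ y, J1 y * Real.exp (-μ * y)) - 1) - c * μ +
          a1 t * pfun r1 a1 T t - b1 t * pfun r2 b2 T t)) = 0 := by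
  obtain ⟨hJm, hJnn, hJ1i, hJexp⟩ := hJ1
  intro c
  -- integrability of the kinetic part
  have hgint : IntervalIntegrable
      (fun t => a1 t * pfun r1 a1 T t - b1 t * pfun r2 b2 T t) volume 0 T := by
    apply ContinuousOn.intervalIntegrable
    rw [Set.uIcc_of_le hT.le]
    exact (ha1.1.continuousOn.mul
        (pfun_contOn r1 a1 T hT hr1.1 hr1.2.1 ha1.1 ha1.2.1)).sub
      (hb1.1.continuousOn.mul
        (pfun_contOn r2 b2 T hT hr2.1 hr2.2.1 hb2.1 hb2.2.1))
  have hD : 0 < ∫ t in (0:ℝ)..T, d1 t :=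
    intervalIntegral.intervalIntegral_pos_of_pos (hd1.1.intervalIntegrable 0 T) hd1.2.1 hT
  -- the formula for the integral
  have hfF : ∀ μ : ℝ, (∫ t in (0:ℝ)..T,
      (d1 t * ((∫ y, J1 y * Real.exp (-μ * y)) - 1) - c * μ +
        a1 t * pfun r1 a1 T t - b1 t * pfun r2 b2 T t))
      = (∫ t in (0:ℝ)..T, d1 t) * ((∫ y, J1 y * Real.exp (-μ * y)) - 1) - c * μ * T +
        (∫ t in (0:ℝ)..T, (a1 t * pfun r1 a1 T t - b1 t * pfun r2 b2 T t)) := by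
    intro μ
    have h1 : IntervalIntegrable
        (fun t => d1 t * ((∫ y, J1 y * Real.exp (-μ * y)) - 1) - c * μ) volume 0 T :=
      ((hd1.1.mul continuous_const).sub continuous_const).intervalIntegrable 0 T
    calc (∫ t in (0:ℝ)..T,
        (d1 t * ((∫ y, J1 y * Real.exp (-μ * y)) - 1) - c * μ +
          a1 t * pfun r1 a1 T t - b1 t * pfun r2 b2 T t))
        = ∫ t in (0:ℝ)..T,
          ((d1 t * ((∫ y, J1 y * Real.exp (-μ * y)) - 1) - c * μ) +
            (a1 t * pfun r1 a1 T t - b1 t * pfun r2 b2 T t)) := by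
          congr 1; funext t; ring
      _ = (∫ t in (0:ℝ)..T,
            (d1 t * ((∫ y, J1 y * Real.exp (-μ * y)) - 1) - c * μ)) +
          (∫ t in (0:ℝ)..T, (a1 t * pfun r1 a1 T t - b1 t * pfun r2 b2 T t)) :=
          intervalIntegral.integral_add h1 hgint
      _ = (∫ t in (0:ℝ)..T, d1 t) * ((∫ y, J1 y * Real.exp (-μ * y)) - 1) - c * μ * T +
          (∫ t in (0:ℝ)..T, (a1 t * pfun r1 a1 T t - b1 t * pfun r2 b2 T t)) := by
          rw [intervalIntegral.integral_sub (f := fun t => d1 t * ((∫ y, J1 y * Real.exp (-μ * y)) - 1))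
              (g := fun _ => c * μ)
              ((hd1.1.mul continuous_const).intervalIntegrable 0 T)
              (intervalIntegrable_const),
            intervalIntegral.integral_mul_const, intervalIntegral.integral_const]
          simp only [smul_eq_mul]
          ring
  have hmain := closed_form c (∫ t in (0:ℝ)..T, d1 t)
    (∫ t in (0:ℝ)..T, (a1 t * pfun r1 a1 T t - b1 t * pfun r2 b2 T t))
    (∫ y, J1 y * y ^ 2) T hD hA2.1 (sigma_pos J1 hJm hJnn hJ1i hJexp) hT
    (fun μ : ℝ => ∫ y, J1 y * Real.exp (-μ * y))
    (M_convex J1 hJnn hJexp) (M_cont J1 hJnn hJexp) (M_zero J1 hJ1i)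
    (M_ge J1 hJm hJnn hJ1i hJ1even hJexp)
  refine ⟨?_, ?_, ?_⟩
  · have := hmain.1
    convert this using 1
    funext μ
    exact hfF μ
  · rw [hfF 0]
    exact hmain.2.1
  · have := hmain.2.2
    simp only [hfF]
    exact this
end

section
/- Assume: T > 0; d2, r1, r2, a1, a2, b1, b2 : ℝ → ℝ are continuous, positive, T-periodic; the kernel J2 is nonnegative, Lebesgue measurable, even (J2(x) = J2(−x)), satisfies ∫_ℝ J2(x) dx = 1 and ∫_ℝ J2(x)e^{−λx} dx < ∞ for every λ ∈ ℝ; and the bistability condition (A2) holds: ∫_0^T (a1(t)p(t) − b1(t)q(t)) dt < 0 and ∫_0^T (b2(t)q(t) − a2(t)p(t)) dt < 0. Define I2(μ, c) = ∫_0^T [d2(t)(∫_ℝ J2(y)e^{μy} dy − 1) + cμ + b2(t)q(t) − a2(t)p(t)] dt. Then for every c ∈ ℝ: the function μ ↦ I2(μ, c) is convex on [0, ∞), I2(0, c) < 0, and there exists exactly one μ > 0 with I2(μ, c) = 0. -/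
open MeasureTheory Set Filter

set_option maxHeartbeats 1000000 in
theorem stmt16 (T : ℝ) (hT : 0 < T) (d2 r1 r2 a1 a2 b1 b2 J2 : ℝ → ℝ)
    (hd2 : Continuous d2 ∧ (∀ t, 0 < d2 t) ∧ ∀ t, d2 (t + T) = d2 t)
    (hr1 : Continuous r1 ∧ (∀ t, 0 < r1 t) ∧ ∀ t, r1 (t + T) = r1 t)
    (hr2 : Continuous r2 ∧ (∀ t, 0 < r2 t) ∧ ∀ t, r2 (t + T) = r2 t)
    (ha1 : Continuous a1 ∧ (∀ t, 0 < a1 t) ∧ ∀ t, a1 (t + T) = a1 t)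
    (ha2 : Continuous a2 ∧ (∀ t, 0 < a2 t) ∧ ∀ t, a2 (t + T) = a2 t)
    (hb1 : Continuous b1 ∧ (∀ t, 0 < b1 t) ∧ ∀ t, b1 (t + T) = b1 t)
    (hb2 : Continuous b2 ∧ (∀ t, 0 < b2 t) ∧ ∀ t, b2 (t + T) = b2 t)
    (hJ2 : Measurable J2 ∧ (∀ x, 0 ≤ J2 x) ∧ (∫ x, J2 x) = 1 ∧
      ∀ l : ℝ, Integrable fun x => J2 x * Real.exp (-l * x))
    (hJ2even : ∀ x, J2 x = J2 (-x))
    (hA2 : (∫ t in (0:ℝ)..T, (a1 t * pfun r1 a1 T t - b1 t * pfun r2 b2 T t)) < 0 ∧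
      (∫ t in (0:ℝ)..T, (b2 t * pfun r2 b2 T t - a2 t * pfun r1 a1 T t)) < 0)
    :
    ∀ c : ℝ,
      ConvexOn ℝ (Set.Ici 0) (fun μ : ℝ => ∫ t in (0:ℝ)..T,
        (d2 t * ((∫ y, J2 y * Real.exp (μ * y)) - 1) + c * μ +
          b2 t * pfun r2 b2 T t - a2 t * pfun r1 a1 T t)) ∧
      (∫ t in (0:ℝ)..T,
        (d2 t * ((∫ y, J2 y * Real.exp ((0:ℝ) * y)) - 1) + c * 0 +
          b2 t * pfun r2 b2 T t - a2 t * pfun r1 a1 T t)) < 0 ∧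
      ∃! μ : ℝ, 0 < μ ∧ (∫ t in (0:ℝ)..T,
        (d2 t * ((∫ y, J2 y * Real.exp (μ * y)) - 1) + c * μ +
          b2 t * pfun r2 b2 T t - a2 t * pfun r1 a1 T t)) = 0 := by
  obtain ⟨hd2c, hd2p, -⟩ := hd2
  obtain ⟨hJm, hJnn, hJ1, hJint⟩ := hJ2
  intro c
  -- basic integrability facts about the kernel
  have hI : ∀ μ : ℝ, Integrable (fun y' => J2 y' * Real.exp (μ * y')) := by
    intro μ; have := hJint (-μ); simpa using this
  have hJI : Integrable J2 := by have := hJint 0; simpa using this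
  -- notation
  set D := ∫ t in (0:ℝ)..T, d2 t with hD
  set G0 := ∫ t in (0:ℝ)..T, (b2 t * pfun r2 b2 T t - a2 t * pfun r1 a1 T t) with hG0def
  have hG0 : G0 < 0 := hA2.2
  have hDpos : 0 < D :=
    intervalIntegral.intervalIntegral_pos_of_pos (hd2c.intervalIntegrable 0 T) hd2p hT
  have hgint : IntervalIntegrable
      (fun t => b2 t * pfun r2 b2 T t - a2 t * pfun r1 a1 T t) volume 0 T := by
    by_contra h
    rw [hG0def, intervalIntegral.integral_undef h] at hG0
    exact lt_irrefl 0 hG0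
  -- representation of the time integral
  have hrep : ∀ μ : ℝ, (∫ t in (0:ℝ)..T,
      (d2 t * ((∫ y, J2 y * Real.exp (μ * y)) - 1) + c * μ +
        b2 t * pfun r2 b2 T t - a2 t * pfun r1 a1 T t))
      = D * ((∫ y, J2 y * Real.exp (μ * y)) - 1) + c * μ * T + G0 := by
    intro μ
    set K := (∫ y, J2 y * Real.exp (μ * y)) - 1 with hK
    have h1 : (fun t => d2 t * K + c * μ +
        b2 t * pfun r2 b2 T t - a2 t * pfun r1 a1 T t)
        = fun t => (d2 t * K + c * μ) +
            (b2 t * pfun r2 b2 T t - a2 t * pfun r1 a1 T t) := by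
      funext t; ring
    rw [h1, intervalIntegral.integral_add (f := fun t => d2 t * K + c * μ)
        (((hd2c.mul continuous_const).add continuous_const : Continuous fun t => d2 t * K + c * μ).intervalIntegrable 0 T) hgint,
      intervalIntegral.integral_add (f := fun t => d2 t * K) (g := fun _ => c * μ)
        ((hd2c.mul continuous_const : Continuous fun t => d2 t * K).intervalIntegrable 0 T)
        (continuous_const.intervalIntegrable 0 T),
      intervalIntegral.integral_mul_const, intervalIntegral.integral_const]
    simp only [smul_eq_mul, ← hG0def]
    ring
  -- key convexity estimate for the kernel transform
  have hkey : ∀ x y a b : ℝ, 0 ≤ a → 0 ≤ b → a + b = 1 →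
      (∫ y', J2 y' * Real.exp ((a*x+b*y) * y')) ≤
        a * (∫ y', J2 y' * Real.exp (x * y')) + b * (∫ y', J2 y' * Real.exp (y * y')) := by
    intro x y a b ha hb hab
    calc (∫ y', J2 y' * Real.exp ((a*x+b*y) * y'))
        ≤ ∫ y', (a * (J2 y' * Real.exp (x*y')) + b * (J2 y' * Real.exp (y*y'))) := by
          apply integral_mono (hI _) (((hI x).const_mul a).add ((hI y).const_mul b))
          intro y'
          have h := convexOn_exp.2 (mem_univ (x*y')) (mem_univ (y*y')) ha hb hab
          simp only [smul_eq_mul] at h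
          have hx' : (a*x+b*y)*y' = a*(x*y') + b*(y*y') := by ring
          dsimp only
          rw [hx']
          calc J2 y' * Real.exp (a*(x*y')+b*(y*y'))
              ≤ J2 y' * (a*Real.exp (x*y') + b*Real.exp (y*y')) :=
                mul_le_mul_of_nonneg_left h (hJnn y')
            _ = a*(J2 y'*Real.exp (x*y')) + b*(J2 y'*Real.exp (y*y')) := by ring
      _ = a * (∫ y', J2 y' * Real.exp (x * y')) + b * (∫ y', J2 y' * Real.exp (y * y')) := by
          rw [integral_add ((hI x).const_mul a) ((hI y).const_mul b),
            integral_const_mul, integral_const_mul]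
  -- the profile function
  set F : ℝ → ℝ :=
    fun μ => D * ((∫ y, J2 y * Real.exp (μ * y)) - 1) + c * μ * T + G0 with hF
  have hFconvU : ConvexOn ℝ univ F := by
    refine ⟨convex_univ, fun x _ y _ a b ha hb hab => ?_⟩
    have hb1 : b = 1 - a := by linarith
    subst hb1
    have key := hkey x y a (1-a) ha hb hab
    have hDkey := mul_le_mul_of_nonneg_left key hDpos.le
    simp only [hF, smul_eq_mul]
    nlinarith [hDkey]
  have hFcont : Continuous F := continuousOn_univ.mp (hFconvU.continuousOn isOpen_univ)
  have hF0 : F 0 = G0 := by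
    have hM0 : (∫ y, J2 y * Real.exp ((0:ℝ) * y)) = 1 := by
      simp only [zero_mul, Real.exp_zero, mul_one]; exact hJ1
    simp only [hF]
    rw [hM0]
    ring
  refine ⟨?_, ?_, ?_⟩
  · -- convexity
    have hfeq : (fun μ : ℝ => ∫ t in (0:ℝ)..T,
        (d2 t * ((∫ y, J2 y * Real.exp (μ * y)) - 1) + c * μ +
          b2 t * pfun r2 b2 T t - a2 t * pfun r1 a1 T t)) = F := funext hrep
    rw [hfeq]
    exact hFconvU.subset (subset_univ _) (convex_Ici 0)
  · -- negativity at 0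
    rw [hrep 0]
    have : F 0 = D * ((∫ y, J2 y * Real.exp ((0:ℝ) * y)) - 1) + c * 0 * T + G0 := rfl
    rw [← this, hF0]
    exact hG0
  · -- unique positive root
    simp only [hrep]
    show ∃! μ : ℝ, 0 < μ ∧ F μ = 0
    -- positivity of mass away from 0
    have hδ : ∃ δ : ℝ, 0 < δ ∧ 0 < ∫ x in Ioi δ, J2 x := by
      have hhalf : (0:ℝ) < ∫ x in Ioi (0:ℝ), J2 x := by
        have h1 : (∫ x in Ioi (0:ℝ), J2 x) = ∫ x in Iic (0:ℝ), J2 x := by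
          have h := integral_comp_neg_Ioi (0:ℝ) J2
          simp only [neg_zero, ← hJ2even] at h
          exact h
        have h2 := intervalIntegral.integral_Iic_add_Ioi (f := J2) (b := (0:ℝ)) (μ := volume)
          hJI.integrableOn hJI.integrableOn
        rw [hJ1] at h2
        linarith
      have hmono : Monotone (fun n : ℕ => Ioi ((n:ℝ)+1)⁻¹) := by
        intro m n hmn
        apply Ioi_subset_Ioi
        apply inv_anti₀ (by positivity)
        have : (m:ℝ) ≤ n := Nat.cast_le.mpr hmn
        linarith
      have hunion : (⋃ n : ℕ, Ioi (((n:ℝ)+1)⁻¹)) = Ioi (0:ℝ) := by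
        ext x
        simp only [mem_iUnion, mem_Ioi]
        constructor
        · rintro ⟨n, hn⟩; exact lt_trans (by positivity) hn
        · intro hx
          obtain ⟨n, hn⟩ := exists_nat_one_div_lt hx
          exact ⟨n, by rwa [one_div] at hn⟩
      have htend := tendsto_setIntegral_of_monotone (μ := volume) (f := J2)
          (s := fun n : ℕ => Ioi (((n:ℝ)+1)⁻¹)) (fun i => measurableSet_Ioi) hmono
          (by rw [hunion]; exact hJI.integrableOn)
      rw [hunion] at htend
      obtain ⟨n, hn⟩ := (htend.eventually (eventually_gt_nhds hhalf)).exists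
      exact ⟨((n:ℝ)+1)⁻¹, by positivity, hn⟩
    obtain ⟨δ, hδpos, hm⟩ := hδ
    set m := ∫ x in Ioi δ, J2 x with hmdef
    -- a point where F is positive
    set B : ℝ := max 1 ((|c*T| + |G0| + D + 1) / (D*m*δ^2/4)) with hBdef
    have hB1 : (1:ℝ) ≤ B := le_max_left _ _
    have hB0 : (0:ℝ) ≤ B := by linarith
    have hα : (0:ℝ) < D*m*δ^2/4 := by
      have h := mul_pos (mul_pos hDpos hm) (pow_pos hδpos 2)
      linarith
    have hαB : |c*T| + |G0| + D + 1 ≤ (D*m*δ^2/4) * B := by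
      have h := (div_le_iff₀ hα).mp (le_max_right 1 ((|c*T| + |G0| + D + 1) / (D*m*δ^2/4)))
      rw [← hBdef] at h
      linarith
    have hMB : Real.exp (B*δ) * m ≤ ∫ y, J2 y * Real.exp (B * y) := by
      calc Real.exp (B * δ) * m
          = ∫ x in Ioi δ, J2 x * Real.exp (B * δ) := by
            rw [mul_comm, hmdef, integral_mul_const]
        _ ≤ ∫ x in Ioi δ, J2 x * Real.exp (B * x) := by
            apply setIntegral_mono_on (hJI.integrableOn.mul_const _) ((hI B).integrableOn)
              measurableSet_Ioi
            intro x hx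
            exact mul_le_mul_of_nonneg_left
              (Real.exp_le_exp.mpr (mul_le_mul_of_nonneg_left (le_of_lt hx) hB0)) (hJnn x)
        _ ≤ ∫ y, J2 y * Real.exp (B * y) := by
            apply setIntegral_le_integral (hI B)
            filter_upwards with x
            exact mul_nonneg (hJnn x) (Real.exp_nonneg _)
    have hexp : (B*δ)^2/4 ≤ Real.exp (B*δ) := by
      have he : Real.exp (B*δ) = Real.exp (B*δ/2) * Real.exp (B*δ/2) := by
        rw [← Real.exp_add]; ring_nf
      nlinarith [Real.add_one_le_exp (B*δ/2), mul_nonneg hB0 hδpos.le]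
    have hFBval : F B = D * ((∫ y, J2 y * Real.exp (B * y)) - 1) + c * B * T + G0 := rfl
    clear_value B
    clear_value m
    clear_value F
    clear_value G0
    clear_value D
    have hFB : 0 < F B := by
      rw [hFBval]
      have t1 : D * (Real.exp (B*δ) * m) ≤ D * ∫ y, J2 y * Real.exp (B * y) :=
        mul_le_mul_of_nonneg_left hMB hDpos.le
      have t2 : D * m * ((B*δ)^2/4) ≤ D * m * Real.exp (B*δ) :=
        mul_le_mul_of_nonneg_left hexp (mul_nonneg hDpos.le hm.le)
      have t3 : (|c*T| + |G0| + D + 1) * B ≤ ((D*m*δ^2/4) * B) * B :=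
        mul_le_mul_of_nonneg_right hαB hB0
      have t4 : -|c*T| * B ≤ c*T*B := mul_le_mul_of_nonneg_right (neg_abs_le (c*T)) hB0
      have t5 : 0 ≤ (|G0| + D + 1) * (B - 1) :=
        mul_nonneg (by have := abs_nonneg G0; linarith) (by linarith)
      have t6 : -|G0| ≤ G0 := neg_abs_le G0
      nlinarith [t1, t2, t3, t4, t5, t6]
    -- existence via IVT
    have hF0neg : F 0 < 0 := by rw [hF0]; exact hG0
    have hivt := intermediate_value_Icc hB0 hFcont.continuousOn
    obtain ⟨μ, hμmem, hμeq⟩ := hivt ⟨hF0neg.le, hFB.le⟩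
    have hμpos : 0 < μ := by
      rcases hμmem.1.lt_or_eq with h | h
      · exact h
      · exfalso; rw [← h] at hμeq; rw [hμeq] at hF0neg; exact lt_irrefl 0 hF0neg
    -- uniqueness
    have huniq : ∀ s t : ℝ, 0 < s → 0 < t → F s = 0 → F t = 0 → s < t → False := by
      intro s t hs ht hFs hFt hst
      have hb : 0 ≤ s / t := div_nonneg hs.le ht.le
      have hb1 : s / t ≤ 1 := by
        rw [div_le_one ht]; exact hst.le
      have ha : 0 ≤ 1 - s / t := by linarith
      have hc := hFconvU.2 (mem_univ (0:ℝ)) (mem_univ t) ha hb (by ring)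
      simp only [smul_eq_mul, mul_zero, zero_add] at hc
      rw [div_mul_cancel₀ _ ht.ne'] at hc
      rw [hFs, hFt, mul_zero, add_zero] at hc
      have hapos : 0 < 1 - s / t := by
        have : s / t < 1 := by rw [div_lt_one ht]; exact hst
        linarith
      nlinarith [hc, mul_pos hapos (neg_pos.mpr hF0neg)]
    refine ⟨μ, ⟨hμpos, hμeq⟩, ?_⟩
    rintro ν ⟨hνpos, hνeq⟩
    rcases lt_trichotomy ν μ with h | h | h
    · exact absurd (huniq ν μ hνpos hμpos hνeq hμeq h) (fun k => k)
    · exact h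
    · exact absurd (huniq μ ν hμpos hνpos hμeq hνeq h) (fun k => k)
end
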